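/- arXiv:1003.1469 — 2 statements merged into one kernel-verified Lean document; each statement's English description precedes it below -/
import Mathlib

section
/- Let n ≥ 3, let U be a nonempty convex open subset of ℝⁿ, and let Γ̃ be a torsion-free affine connection on U with projective Weyl tensor W^a_{bcd}. If the projective class of Γ̃ contains the Levi-Civita connection of some smooth pseudo-Riemannian metric on U, then for every pair of indices e ≠ d and every point x ∈ U, the linear endomorphism T_{[ed]}(x) of the space of symmetric n×n real matrices, defined by (T_{[ed]}(x) κ)^{cb} = Σ_{a,f} T_{[ed]}^{cb}{}_{af}(x) κ^{af} with T_{[ed]}^{cb}{}_{af} = ½ δ^c_{(a} W^b_{f)ed} + ½ δ^b_{(a} W^c_{f)ed} + (1/n) W^c_{(af)[e} δ^b_{d]} + (1/n) W^b_{(af)[e} δ^c_{d]}, is singular, i.e. has vanishing determinant (equivalently, is not injective). -/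
open scoped BigOperators

noncomputable section

/-- Partial derivative of `f` in the `b`-th coordinate direction at `x`. -/
def pd {n : ℕ} (b : Fin n) (f : (Fin n → ℝ) → ℝ) (x : Fin n → ℝ) : ℝ :=
  fderiv ℝ f x (Pi.single b 1)

/-- Kronecker delta. -/
def kd {n : ℕ} (a b : Fin n) : ℝ := if a = b then 1 else 0

/-- A torsion-free affine connection on `U`, given by smooth coefficients `Γ^a_{bc}`,
symmetric in the lower indices. -/
def IsConn {n : ℕ} (U : Set (Fin n → ℝ))
    (Γ : Fin n → Fin n → Fin n → (Fin n → ℝ) → ℝ) : Prop :=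
  (∀ a b c, ContDiffOn ℝ (⊤ : ℕ∞) (Γ a b c) U) ∧
  (∀ a b c, ∀ x ∈ U, Γ a b c x = Γ a c b x)

/-- Curvature tensor `R^a_{bcd}` of the connection `Γ`. -/
def curv {n : ℕ} (Γ : Fin n → Fin n → Fin n → (Fin n → ℝ) → ℝ)
    (a b c d : Fin n) (x : Fin n → ℝ) : ℝ :=
  pd c (Γ a b d) x - pd d (Γ a b c) x
    + ∑ e, (Γ a e c x * Γ e b d x - Γ a e d x * Γ e b c x)

/-- Ricci tensor `R_{bd} = Σ_a R^a_{bad}`. -/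
def ricci {n : ℕ} (Γ : Fin n → Fin n → Fin n → (Fin n → ℝ) → ℝ)
    (b d : Fin n) (x : Fin n → ℝ) : ℝ :=
  ∑ a, curv Γ a b a d x

/-- Projective Schouten tensor `P_{ab} = (1/(n-1)) R_{(ab)} - (1/(n+1)) R_{[ab]}`. -/
def schouten {n : ℕ} (Γ : Fin n → Fin n → Fin n → (Fin n → ℝ) → ℝ)
    (a b : Fin n) (x : Fin n → ℝ) : ℝ :=
  (1/((n : ℝ) - 1)) * ((ricci Γ a b x + ricci Γ b a x)/2)
    - (1/((n : ℝ) + 1)) * ((ricci Γ a b x - ricci Γ b a x)/2)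

/-- Projective Weyl tensor
`W^a_{bcd} = R^a_{bcd} - δ^a_c P_{db} + δ^a_d P_{cb} + 2 δ^a_b P_{[cd]}`. -/
def weyl {n : ℕ} (Γ : Fin n → Fin n → Fin n → (Fin n → ℝ) → ℝ)
    (a b c d : Fin n) (x : Fin n → ℝ) : ℝ :=
  curv Γ a b c d x - kd a c * schouten Γ d b x + kd a d * schouten Γ c b x
    + 2 * kd a b * ((schouten Γ c d x - schouten Γ d c x)/2)

/-- Covariant derivative `∇_a P_{bc}` of the projective Schouten tensor. -/
def covSchouten {n : ℕ} (Γ : Fin n → Fin n → Fin n → (Fin n → ℝ) → ℝ)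
    (a b c : Fin n) (x : Fin n → ℝ) : ℝ :=
  pd a (schouten Γ b c) x - (∑ e, Γ e b a x * schouten Γ e c x)
    - (∑ e, Γ e c a x * schouten Γ b e x)

/-- Projective Cotton tensor `Y_{bca} = ∇_b P_{ca} - ∇_c P_{ba}`. -/
def cotton {n : ℕ} (Γ : Fin n → Fin n → Fin n → (Fin n → ℝ) → ℝ)
    (b c a : Fin n) (x : Fin n → ℝ) : ℝ :=
  covSchouten Γ b c a x - covSchouten Γ c b a x

/-- Covariant derivative `∇_e W^a_{bcd}` of the projective Weyl tensor. -/
def covWeyl {n : ℕ} (Γ : Fin n → Fin n → Fin n → (Fin n → ℝ) → ℝ)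
    (e a b c d : Fin n) (x : Fin n → ℝ) : ℝ :=
  pd e (weyl Γ a b c d) x + (∑ f, Γ a f e x * weyl Γ f b c d x)
    - (∑ f, Γ f b e x * weyl Γ a f c d x)
    - (∑ f, Γ f c e x * weyl Γ a b f d x)
    - (∑ f, Γ f d e x * weyl Γ a b c f x)

/-- Covariant derivative `∇_a Y_{bcd}` of the projective Cotton tensor. -/
def covCotton {n : ℕ} (Γ : Fin n → Fin n → Fin n → (Fin n → ℝ) → ℝ)
    (a b c d : Fin n) (x : Fin n → ℝ) : ℝ :=
  pd a (cotton Γ b c d) x - (∑ e, Γ e b a x * cotton Γ e c d x)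
    - (∑ e, Γ e c a x * cotton Γ b e d x)
    - (∑ e, Γ e d a x * cotton Γ b c e x)

/-- Covariant derivative `∇_a A_b` of a 1-form `A`. -/
def cov1 {n : ℕ} (Γ : Fin n → Fin n → Fin n → (Fin n → ℝ) → ℝ)
    (a b : Fin n) (A : Fin n → (Fin n → ℝ) → ℝ) (x : Fin n → ℝ) : ℝ :=
  pd a (A b) x - ∑ e, Γ e b a x * A e x

/-- Covariant derivative `∇_c g^{ab}` of a (2,0)-tensor `g`. -/
def covUp2 {n : ℕ} (Γ : Fin n → Fin n → Fin n → (Fin n → ℝ) → ℝ)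
    (c a b : Fin n) (g : Fin n → Fin n → (Fin n → ℝ) → ℝ) (x : Fin n → ℝ) : ℝ :=
  pd c (g a b) x + (∑ e, Γ a e c x * g e b x) + (∑ e, Γ b e c x * g a e x)

/-- Covariant derivative `∇_a μ^b` of a vector field `μ`. -/
def covVec {n : ℕ} (Γ : Fin n → Fin n → Fin n → (Fin n → ℝ) → ℝ)
    (a b : Fin n) (μ : Fin n → (Fin n → ℝ) → ℝ) (x : Fin n → ℝ) : ℝ :=
  pd a (μ b) x + ∑ e, Γ b e a x * μ e x

/-- A smooth pseudo-Riemannian metric on `U`: smooth, symmetric, and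
nondegenerate at every point of `U`. -/
def IsMetric {n : ℕ} (U : Set (Fin n → ℝ))
    (g : Fin n → Fin n → (Fin n → ℝ) → ℝ) : Prop :=
  (∀ a b, ContDiffOn ℝ (⊤ : ℕ∞) (g a b) U) ∧
  (∀ a b, ∀ x ∈ U, g a b x = g b a x) ∧
  (∀ x ∈ U, (Matrix.of fun a b => g a b x).det ≠ 0)

/-- Pointwise inverse `g^{ab}` of a metric (or pointwise matrix inverse of any
2-index field). -/
def minv {n : ℕ} (g : Fin n → Fin n → (Fin n → ℝ) → ℝ)
    (a b : Fin n) (x : Fin n → ℝ) : ℝ :=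
  (Matrix.of fun i j => g i j x)⁻¹ a b

/-- Levi-Civita connection coefficients
`Γ^a_{bc} = ½ Σ_d g^{ad}(∂_b g_{dc} + ∂_c g_{bd} - ∂_d g_{bc})` of a metric `g`. -/
def levicivita {n : ℕ} (g : Fin n → Fin n → (Fin n → ℝ) → ℝ)
    (a b c : Fin n) (x : Fin n → ℝ) : ℝ :=
  (1/2) * ∑ d, minv g a d x * (pd b (g d c) x + pd c (g b d) x - pd d (g b c) x)

/-- Ricci scalar `R = Σ_{a,b} g^{ab} R_{ab}` of a metric `g`. -/
def ricciScalar {n : ℕ} (g : Fin n → Fin n → (Fin n → ℝ) → ℝ)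
    (x : Fin n → ℝ) : ℝ :=
  ∑ a, ∑ b, minv g a b x * ricci (levicivita g) a b x

/-- Metric Schouten tensor `LCP_{ab} = (1/(n-2))(R_{ab} - R g_{ab}/(2(n-1)))`. -/
def lcSchouten {n : ℕ} (g : Fin n → Fin n → (Fin n → ℝ) → ℝ)
    (a b : Fin n) (x : Fin n → ℝ) : ℝ :=
  (1/((n : ℝ) - 2)) *
    (ricci (levicivita g) a b x - ricciScalar g x * g a b x / (2*((n : ℝ) - 1)))

/-- Metric (conformal) Weyl tensor of a metric `g`. -/
def lcWeyl {n : ℕ} (g : Fin n → Fin n → (Fin n → ℝ) → ℝ)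
    (a b c d : Fin n) (x : Fin n → ℝ) : ℝ :=
  curv (levicivita g) a b c d x - kd a c * lcSchouten g d b x
    + kd a d * lcSchouten g c b x
    - (∑ e, g b d x * minv g a e x * lcSchouten g e c x)
    + (∑ e, g b c x * minv g a e x * lcSchouten g e d x)

/-- `Γ'` is projectively equivalent to `Γ` on `U`:
`Γ'^a_{bc} = Γ^a_{bc} + δ^a_c A_b + δ^a_b A_c` for some smooth 1-form `A`. -/
def ProjEquiv {n : ℕ} (U : Set (Fin n → ℝ))
    (Γ' Γ : Fin n → Fin n → Fin n → (Fin n → ℝ) → ℝ) : Prop :=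
  ∃ A : Fin n → (Fin n → ℝ) → ℝ, (∀ a, ContDiffOn ℝ (⊤ : ℕ∞) (A a) U) ∧
    ∀ a b c, ∀ x ∈ U, Γ' a b c x = Γ a b c x + kd a c * A b x + kd a b * A c x

/-- A connection is special on `U` if its projective Schouten tensor is symmetric. -/
def IsSpecial {n : ℕ} (U : Set (Fin n → ℝ))
    (Γ : Fin n → Fin n → Fin n → (Fin n → ℝ) → ℝ) : Prop :=
  ∀ a b, ∀ x ∈ U, schouten Γ a b x = schouten Γ b a x

/-- A smooth symmetric (2,0)-tensor field on `U`. -/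
def SmoothSym2 {n : ℕ} (U : Set (Fin n → ℝ))
    (g : Fin n → Fin n → (Fin n → ℝ) → ℝ) : Prop :=
  (∀ a b, ContDiffOn ℝ (⊤ : ℕ∞) (g a b) U) ∧ (∀ a b, ∀ x ∈ U, g a b x = g b a x)

/-- The prolonged metrisability system (3.10) for `(g^{ab}, μ^a, ρ)`:
`∇_c g^{ab} = μ^a δ^b_c + μ^b δ^a_c`,
`∇_a μ^b = ρ δ^b_a - Σ_c P_{ac} g^{bc} - (1/n) Σ_{c,d} W^b_{cda} g^{cd}`,
`∇_a ρ = -2 Σ_b P_{ab} μ^b + (2/n) Σ_{b,c} Y_{abc} g^{bc}`. -/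
def ProlongedSys {n : ℕ} (U : Set (Fin n → ℝ))
    (Γ : Fin n → Fin n → Fin n → (Fin n → ℝ) → ℝ)
    (g : Fin n → Fin n → (Fin n → ℝ) → ℝ)
    (μ : Fin n → (Fin n → ℝ) → ℝ) (ρ : (Fin n → ℝ) → ℝ) : Prop :=
  (∀ a b c, ∀ x ∈ U, covUp2 Γ c a b g x = μ a x * kd b c + μ b x * kd a c) ∧
  (∀ a b, ∀ x ∈ U, covVec Γ a b μ x =
      ρ x * kd b a - (∑ c, schouten Γ a c x * g b c x)
        - (1/(n : ℝ)) * ∑ c, ∑ d, weyl Γ b c d a x * g c d x) ∧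
  (∀ a, ∀ x ∈ U, pd a ρ x =
      -2 * (∑ b, schouten Γ a b x * μ b x)
        + (2/(n : ℝ)) * ∑ b, ∑ c, cotton Γ a b c x * g b c x)

/-- The tensor `T_{[ed]}^{cb}{}_{af}` of Proposition 3.6 (eq. (3.12)). -/
def Ttensor {n : ℕ} (Γ : Fin n → Fin n → Fin n → (Fin n → ℝ) → ℝ)
    (e d c b a f : Fin n) (x : Fin n → ℝ) : ℝ :=
  (1/2) * ((kd c a * weyl Γ b f e d x + kd c f * weyl Γ b a e d x)/2)
  + (1/2) * ((kd b a * weyl Γ c f e d x + kd b f * weyl Γ c a e d x)/2)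
  + (1/(n : ℝ)) * ((((weyl Γ c a f e x + weyl Γ c f a e x)/2) * kd b d
      - ((weyl Γ c a f d x + weyl Γ c f a d x)/2) * kd b e)/2)
  + (1/(n : ℝ)) * ((((weyl Γ b a f e x + weyl Γ b f a e x)/2) * kd c d
      - ((weyl Γ b a f d x + weyl Γ b f a d x)/2) * kd c e)/2)

/-- The tensor `S_{[ae]}^b{}_{cd}` of Proposition 3.8. -/
def Stensor {n : ℕ} (Γ : Fin n → Fin n → Fin n → (Fin n → ℝ) → ℝ)
    (a e b c d : Fin n) (x : Fin n → ℝ) : ℝ :=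
  (((n : ℝ) - 2)/2) * ((cotton Γ e a c x * kd b d + cotton Γ e a d x * kd b c)/2)
  + (covWeyl Γ c b d e a x + covWeyl Γ d b c e a x)/2
  + (((covWeyl Γ a b c d e x + covWeyl Γ a b d c e x)/2)
      - ((covWeyl Γ e b c d a x + covWeyl Γ e b d c a x)/2))/2

/-- The tensor `U_{[ab]cd}` of Proposition 3.9. -/
def Utensor {n : ℕ} (Γ : Fin n → Fin n → Fin n → (Fin n → ℝ) → ℝ)
    (a b c d : Fin n) (x : Fin n → ℝ) : ℝ :=
  (((covCotton Γ a b c d x + covCotton Γ a b d c x)/2)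
      - ((covCotton Γ b a c d x + covCotton Γ b a d c x)/2))/2
  + ∑ e, (((weyl Γ e c d a x + weyl Γ e d c a x)/2) * schouten Γ b e x
      - ((weyl Γ e c d b x + weyl Γ e d c b x)/2) * schouten Γ a e x)/2

end


noncomputable section MetrisAux
open Filter Topology

namespace MetrisAux

variable {n : ℕ} {f g : (Fin n → ℝ) → ℝ} {x : Fin n → ℝ} {U : Set (Fin n → ℝ)}

/-! ### Calculus toolkit for `pd` -/

lemma pd_congr (hU : IsOpen U) (hx : x ∈ U) (h : ∀ y ∈ U, f y = g y) (b : Fin n) :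
    pd b f x = pd b g x := by
  unfold pd
  rw [Filter.EventuallyEq.fderiv_eq (Filter.eventuallyEq_of_mem (hU.mem_nhds hx) h)]

lemma pd_const (c : ℝ) (b : Fin n) : pd b (fun _ => c) x = 0 := by
  simp [pd]

lemma pd_add (hf : DifferentiableAt ℝ f x) (hg : DifferentiableAt ℝ g x) (b : Fin n) :
    pd b (fun y => f y + g y) x = pd b f x + pd b g x := by
  simp [pd, fderiv_fun_add hf hg]

lemma pd_sub (hf : DifferentiableAt ℝ f x) (hg : DifferentiableAt ℝ g x) (b : Fin n) :
    pd b (fun y => f y - g y) x = pd b f x - pd b g x := by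
  simp [pd, fderiv_fun_sub hf hg]

lemma pd_neg (b : Fin n) : pd b (fun y => -f y) x = - pd b f x := by
  simp [pd, fderiv_neg]

lemma pd_mul (hf : DifferentiableAt ℝ f x) (hg : DifferentiableAt ℝ g x) (b : Fin n) :
    pd b (fun y => f y * g y) x = pd b f x * g x + f x * pd b g x := by
  simp [pd, fderiv_fun_mul hf hg]; ring

lemma pd_const_mul (hf : DifferentiableAt ℝ f x) (c : ℝ) (b : Fin n) :
    pd b (fun y => c * f y) x = c * pd b f x := by
  simp [pd, fderiv_const_mul hf]

lemma pd_sum {ι : Type*} (s : Finset ι) (F : ι → (Fin n → ℝ) → ℝ)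
    (hf : ∀ i ∈ s, DifferentiableAt ℝ (F i) x) (b : Fin n) :
    pd b (fun y => ∑ i ∈ s, F i y) x = ∑ i ∈ s, pd b (F i) x := by
  simp [pd, fderiv_fun_sum hf]

lemma contDiffAt_pd (hf : ContDiffAt ℝ (⊤ : ℕ∞) f x) (b : Fin n) :
    ContDiffAt ℝ (⊤ : ℕ∞) (pd b f) x := by
  have h1 : ContDiffAt ℝ (⊤ : ℕ∞) (fderiv ℝ f) x := hf.fderiv_right (by simp)
  exact (ContinuousLinearMap.apply ℝ ℝ (Pi.single b 1)).contDiff.contDiffAt.comp x h1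

lemma pd_comm (hf : ContDiffAt ℝ (⊤ : ℕ∞) f x) (c d : Fin n) :
    pd c (fun y => pd d f y) x = pd d (fun y => pd c f y) x := by
  have hsymm := hf.isSymmSndFDerivAt ((by rw [minSmoothness_of_isRCLikeNormedField]; exact WithTop.coe_le_coe.mpr (le_top : (2 : ℕ∞) ≤ ⊤)))
  have hdf : DifferentiableAt ℝ (fderiv ℝ f) x :=
    (hf.fderiv_right (m := 1) (by exact WithTop.coe_le_coe.mpr le_top)).differentiableAt (by simp)
  have key : ∀ u v : Fin n, pd u (fun y => pd v f y) x
      = fderiv ℝ (fderiv ℝ f) x (Pi.single u 1) (Pi.single v 1) := by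
    intro u v
    show fderiv ℝ (fun y => fderiv ℝ f y (Pi.single v 1)) x (Pi.single u 1) = _
    rw [fderiv_clm_apply hdf (differentiableAt_const _)]
    simp
  rw [key, key, hsymm]

/-! ### Kronecker delta -/

lemma sum_kd_mul (F : Fin n → ℝ) (a : Fin n) : ∑ e, kd a e * F e = F a := by
  rw [Finset.sum_eq_single a]
  · simp [kd]
  · intro e _ he; simp [kd, Ne.symm he]
  · simp

lemma sum_kd_mul' (F : Fin n → ℝ) (a : Fin n) : ∑ e, kd e a * F e = F a := by
  rw [Finset.sum_eq_single a]
  · simp [kd]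
  · intro e _ he; simp [kd, he]
  · simp

lemma sum_mul_kd (F : Fin n → ℝ) (a : Fin n) : ∑ e, F e * kd a e = F a := by
  rw [Finset.sum_eq_single a]
  · simp [kd]
  · intro e _ he; simp [kd, Ne.symm he]
  · simp

lemma sum_mul_kd' (F : Fin n → ℝ) (a : Fin n) : ∑ e, F e * kd e a = F a := by
  rw [Finset.sum_eq_single a]
  · simp [kd]
  · intro e _ he; simp [kd, he]
  · simp

lemma sum2_swap (F : Fin n → Fin n → ℝ) :
    ∑ a, ∑ b, F a b = ∑ a, ∑ b, F b a := Finset.sum_comm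

/-! ### Smoothness of the inverse metric -/

lemma contDiffAt_det (M : (Fin n → ℝ) → Matrix (Fin n) (Fin n) ℝ)
    (h : ∀ i j, ContDiffAt ℝ (⊤ : ℕ∞) (fun y => M y i j) x) :
    ContDiffAt ℝ (⊤ : ℕ∞) (fun y => (M y).det) x := by
  simp only [Matrix.det_apply']
  apply ContDiffAt.sum
  intro σ _
  exact contDiffAt_const.mul (contDiffAt_prod fun i _ => h (σ i) i)

lemma contDiffAt_minv {g : Fin n → Fin n → (Fin n → ℝ) → ℝ}
    (h : ∀ i j, ContDiffAt ℝ (⊤ : ℕ∞) (g i j) x)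
    (hdet : (Matrix.of fun i j => g i j x).det ≠ 0) (a b : Fin n) :
    ContDiffAt ℝ (⊤ : ℕ∞) (minv g a b) x := by
  have heq : minv g a b = fun y =>
      ((Matrix.of fun i j => g i j y).det)⁻¹ *
        (Matrix.of fun i j => g i j y).adjugate a b := by
    funext y
    rw [minv, Matrix.inv_def]
    simp [Ring.inverse_eq_inv', Matrix.smul_apply, smul_eq_mul]
  rw [heq]
  have hdet' : ContDiffAt ℝ (⊤ : ℕ∞) (fun y => (Matrix.of fun i j => g i j y).det) x :=
    contDiffAt_det _ (by intro i j; exact h i j)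
  refine (hdet'.inv hdet).mul ?_
  simp only [Matrix.adjugate_apply]
  apply contDiffAt_det
  intro i j
  by_cases hib : i = b
  · subst hib; simpa [Matrix.updateRow_apply] using contDiffAt_const
  · simpa [Matrix.updateRow_apply, hib] using h i j

/-! ### Basic facts about a metric on `U` -/

lemma g_cd (hUo : IsOpen U) {g : Fin n → Fin n → (Fin n → ℝ) → ℝ}
    (hg : IsMetric U g) (hx : x ∈ U) (a b : Fin n) : ContDiffAt ℝ (⊤ : ℕ∞) (g a b) x :=
  (hg.1 a b).contDiffAt (hUo.mem_nhds hx)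

lemma minv_cd (hUo : IsOpen U) {g : Fin n → Fin n → (Fin n → ℝ) → ℝ}
    (hg : IsMetric U g) (hx : x ∈ U) (a b : Fin n) : ContDiffAt ℝ (⊤ : ℕ∞) (minv g a b) x :=
  contDiffAt_minv (fun i j => g_cd hUo hg hx i j) (hg.2.2 x hx) a b

lemma g_minv {g : Fin n → Fin n → (Fin n → ℝ) → ℝ}
    (hg : IsMetric U g) (hx : x ∈ U) (a b : Fin n) :
    ∑ e, g a e x * minv g e b x = kd a b := by
  have h : (Matrix.of fun i j => g i j x) * (Matrix.of fun i j => g i j x)⁻¹ = 1 :=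
    Matrix.mul_nonsing_inv _ ((hg.2.2 x hx).isUnit)
  have := congrFun (congrFun h a) b
  simpa [Matrix.mul_apply, Matrix.one_apply, kd, minv] using this

lemma minv_g {g : Fin n → Fin n → (Fin n → ℝ) → ℝ}
    (hg : IsMetric U g) (hx : x ∈ U) (a b : Fin n) :
    ∑ e, minv g a e x * g e b x = kd a b := by
  have h : (Matrix.of fun i j => g i j x)⁻¹ * (Matrix.of fun i j => g i j x) = 1 :=
    Matrix.nonsing_inv_mul _ ((hg.2.2 x hx).isUnit)
  have := congrFun (congrFun h a) b
  simpa [Matrix.mul_apply, Matrix.one_apply, kd, minv] using this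

lemma minv_symm {g : Fin n → Fin n → (Fin n → ℝ) → ℝ}
    (hg : IsMetric U g) (hx : x ∈ U) (a b : Fin n) :
    minv g a b x = minv g b a x := by
  have hsym : Matrix.transpose (Matrix.of fun i j => g i j x)
      = (Matrix.of fun i j => g i j x) := by
    ext i j; simp [Matrix.transpose_apply, hg.2.1 j i x hx]
  have h2 := Matrix.transpose_nonsing_inv (Matrix.of fun i j => g i j x)
  rw [hsym] at h2
  have := congrFun (congrFun h2.symm b) a
  simp only [Matrix.transpose_apply] at this
  simpa [minv] using this.symm

lemma pd_minv (hUo : IsOpen U) {g : Fin n → Fin n → (Fin n → ℝ) → ℝ}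
    (hg : IsMetric U g) (hx : x ∈ U) (c a b : Fin n) :
    pd c (minv g a b) x =
      -∑ p, ∑ q, minv g a p x * pd c (g p q) x * minv g q b x := by
  have key : ∀ a b : Fin n, ∑ e, (pd c (g a e) x * minv g e b x
      + g a e x * pd c (minv g e b) x) = 0 := by
    intro a b
    have h1 : pd c (fun y => ∑ e, g a e y * minv g e b y) x
        = pd c (fun _ => kd a b) x :=
      pd_congr hUo hx (fun y hy => g_minv hg hy a b) c
    rw [pd_const] at h1
    rw [pd_sum _ _ (fun e _ => ((g_cd hUo hg hx a e).differentiableAt (by simp)).fun_mul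
      ((minv_cd hUo hg hx e b).differentiableAt (by simp)))] at h1
    rw [← h1]
    exact Finset.sum_congr rfl fun e _ => by
      rw [pd_mul ((g_cd hUo hg hx a e).differentiableAt (by simp))
        ((minv_cd hUo hg hx e b).differentiableAt (by simp))]
  have h3 : (∑ p, ∑ e, minv g a p x * (pd c (g p e) x * minv g e b x))
      + (∑ p, ∑ e, minv g a p x * (g p e x * pd c (minv g e b) x)) = 0 := by
    have h2 : ∑ p, minv g a p x * (∑ e, (pd c (g p e) x * minv g e b x
        + g p e x * pd c (minv g e b) x)) = 0 := by
      simp [key]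
    calc (∑ p, ∑ e, minv g a p x * (pd c (g p e) x * minv g e b x))
          + (∑ p, ∑ e, minv g a p x * (g p e x * pd c (minv g e b) x))
        = ∑ p, ((∑ e, minv g a p x * (pd c (g p e) x * minv g e b x))
          + (∑ e, minv g a p x * (g p e x * pd c (minv g e b) x))) := by
          rw [Finset.sum_add_distrib]
      _ = ∑ p, minv g a p x * (∑ e, (pd c (g p e) x * minv g e b x
            + g p e x * pd c (minv g e b) x)) := by
          refine Finset.sum_congr rfl fun p _ => ?_
          rw [Finset.mul_sum]; rw [← Finset.sum_add_distrib]
          exact Finset.sum_congr rfl fun e _ => by ring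
      _ = 0 := h2
  have h4 : (∑ p, ∑ e, minv g a p x * (g p e x * pd c (minv g e b) x))
      = pd c (minv g a b) x := by
    rw [Finset.sum_comm]
    have h5 : ∀ e, (∑ p, minv g a p x * (g p e x * pd c (minv g e b) x))
        = kd a e * pd c (minv g e b) x := by
      intro e
      rw [← minv_g hg hx a e, Finset.sum_mul]
      exact Finset.sum_congr rfl fun p _ => by ring
    rw [Finset.sum_congr rfl fun e _ => h5 e]
    exact sum_kd_mul _ a
  rw [h4] at h3
  have h6 : pd c (minv g a b) x
      = -(∑ p, ∑ e, minv g a p x * (pd c (g p e) x * minv g e b x)) := by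
    linarith [h3]
  rw [h6]
  congr 1
  exact Finset.sum_congr rfl fun p _ => Finset.sum_congr rfl fun q _ => by ring

/-! ### The Levi-Civita connection -/

lemma lc_cd (hUo : IsOpen U) {g : Fin n → Fin n → (Fin n → ℝ) → ℝ}
    (hg : IsMetric U g) (hx : x ∈ U) (a b c : Fin n) :
    ContDiffAt ℝ (⊤ : ℕ∞) (levicivita g a b c) x := by
  show ContDiffAt ℝ (⊤ : ℕ∞) (fun y => (1/2 : ℝ) * ∑ d, minv g a d y *
    (pd b (g d c) y + pd c (g b d) y - pd d (g b c) y)) x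
  refine ContDiffAt.mul contDiffAt_const (ContDiffAt.sum fun d _ => ?_)
  exact (minv_cd hUo hg hx a d).mul
    (((contDiffAt_pd (g_cd hUo hg hx d c) b).add
      (contDiffAt_pd (g_cd hUo hg hx b d) c)).sub
      (contDiffAt_pd (g_cd hUo hg hx b c) d))

lemma lc_diff (hUo : IsOpen U) {g : Fin n → Fin n → (Fin n → ℝ) → ℝ}
    (hg : IsMetric U g) (hx : x ∈ U) (a b c : Fin n) :
    DifferentiableAt ℝ (levicivita g a b c) x :=
  (lc_cd hUo hg hx a b c).differentiableAt (by simp)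

lemma pd_g_symm (hUo : IsOpen U) {g : Fin n → Fin n → (Fin n → ℝ) → ℝ}
    (hg : IsMetric U g) (hx : x ∈ U) (e a b : Fin n) :
    pd e (g a b) x = pd e (g b a) x :=
  pd_congr hUo hx (fun y hy => hg.2.1 a b y hy) e

lemma lc_symm (hUo : IsOpen U) {g : Fin n → Fin n → (Fin n → ℝ) → ℝ}
    (hg : IsMetric U g) (hx : x ∈ U) (a b c : Fin n) :
    levicivita g a b c x = levicivita g a c b x := by
  simp only [levicivita]
  congr 1
  refine Finset.sum_congr rfl fun d _ => ?_
  rw [pd_g_symm hUo hg hx b d c, pd_g_symm hUo hg hx d b c,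
    pd_g_symm hUo hg hx c b d]
  ring

lemma sum_lc_g (hUo : IsOpen U) {g : Fin n → Fin n → (Fin n → ℝ) → ℝ}
    (hg : IsMetric U g) (hx : x ∈ U) (a b c : Fin n) :
    ∑ e, levicivita g e a c x * g e b x
      = (1/2) * (pd a (g b c) x + pd c (g a b) x - pd b (g a c) x) := by
  simp only [levicivita]
  calc ∑ e, ((1/2 : ℝ) * ∑ d, minv g e d x *
        (pd a (g d c) x + pd c (g a d) x - pd d (g a c) x)) * g e b x
      = ∑ e, ∑ d, (g b e x * minv g e d x) *
        ((1/2) * (pd a (g d c) x + pd c (g a d) x - pd d (g a c) x)) := by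
        refine Finset.sum_congr rfl fun e _ => ?_
        rw [Finset.mul_sum, Finset.sum_mul]
        refine Finset.sum_congr rfl fun d _ => ?_
        rw [hg.2.1 b e x hx]; ring
    _ = ∑ d, ∑ e, (g b e x * minv g e d x) *
        ((1/2) * (pd a (g d c) x + pd c (g a d) x - pd d (g a c) x)) :=
        Finset.sum_comm
    _ = ∑ d, (∑ e, g b e x * minv g e d x) *
        ((1/2) * (pd a (g d c) x + pd c (g a d) x - pd d (g a c) x)) := by
        refine Finset.sum_congr rfl fun d _ => ?_
        rw [Finset.sum_mul]
    _ = ∑ d, kd b d * ((1/2) * (pd a (g d c) x + pd c (g a d) x - pd d (g a c) x)) := by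
        refine Finset.sum_congr rfl fun d _ => ?_
        rw [g_minv hg hx b d]
    _ = (1/2) * (pd a (g b c) x + pd c (g a b) x - pd b (g a c) x) := by
        rw [sum_kd_mul]

lemma lc_compat_lower (hUo : IsOpen U) {g : Fin n → Fin n → (Fin n → ℝ) → ℝ}
    (hg : IsMetric U g) (hx : x ∈ U) (c a b : Fin n) :
    pd c (g a b) x = (∑ e, levicivita g e a c x * g e b x)
      + ∑ e, levicivita g e b c x * g a e x := by
  have h2 : ∑ e, levicivita g e b c x * g a e x
      = ∑ e, levicivita g e b c x * g e a x :=
    Finset.sum_congr rfl fun e _ => by rw [hg.2.1 a e x hx]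
  rw [sum_lc_g hUo hg hx a b c, h2, sum_lc_g hUo hg hx b a c,
    pd_g_symm hUo hg hx c b a, pd_g_symm hUo hg hx a b c]
  ring

lemma lc_compat_upper (hUo : IsOpen U) {g : Fin n → Fin n → (Fin n → ℝ) → ℝ}
    (hg : IsMetric U g) (hx : x ∈ U) (c a b : Fin n) :
    pd c (minv g a b) x = -(∑ e, levicivita g a e c x * minv g e b x)
      - ∑ e, levicivita g b e c x * minv g a e x := by
  rw [pd_minv hUo hg hx c a b]
  have key : ∀ p q, pd c (g p q) x = (∑ e, levicivita g e p c x * g e q x)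
      + ∑ e, levicivita g e q c x * g p e x := fun p q => lc_compat_lower hUo hg hx c p q
  have expand : ∑ p, ∑ q, minv g a p x * pd c (g p q) x * minv g q b x
      = (∑ p, ∑ q, ∑ e, minv g a p x * (levicivita g e p c x * g e q x) * minv g q b x)
      + (∑ p, ∑ q, ∑ e, minv g a p x * (levicivita g e q c x * g p e x) * minv g q b x) := by
    rw [← Finset.sum_add_distrib]
    refine Finset.sum_congr rfl fun p _ => ?_
    rw [← Finset.sum_add_distrib]
    refine Finset.sum_congr rfl fun q _ => ?_
    rw [key p q, mul_add, add_mul, Finset.mul_sum, Finset.mul_sum,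
      Finset.sum_mul, Finset.sum_mul]
  -- first triple sum: ∑_q kd ?  handle each
  have h1 : (∑ p, ∑ q, ∑ e, minv g a p x * (levicivita g e p c x * g e q x) * minv g q b x)
      = ∑ e, levicivita g b e c x * minv g a e x := by
    -- sum over q first : ∑_q g e q * minv q b = kd e b
    calc (∑ p, ∑ q, ∑ e, minv g a p x * (levicivita g e p c x * g e q x) * minv g q b x)
        = ∑ p, ∑ e, (minv g a p x * levicivita g e p c x) * (∑ q, g e q x * minv g q b x) := by
          refine Finset.sum_congr rfl fun p _ => ?_
          rw [Finset.sum_comm]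
          refine Finset.sum_congr rfl fun e _ => ?_
          rw [Finset.mul_sum]
          exact Finset.sum_congr rfl fun q _ => by ring
      _ = ∑ p, ∑ e, (minv g a p x * levicivita g e p c x) * kd e b := by
          refine Finset.sum_congr rfl fun p _ => Finset.sum_congr rfl fun e _ => ?_
          rw [g_minv hg hx e b]
      _ = ∑ p, minv g a p x * levicivita g b p c x := by
          refine Finset.sum_congr rfl fun p _ => ?_
          rw [sum_mul_kd' (fun e => minv g a p x * levicivita g e p c x) b]
      _ = ∑ e, levicivita g b e c x * minv g a e x :=
          Finset.sum_congr rfl fun p _ => by ring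
  have h2 : (∑ p, ∑ q, ∑ e, minv g a p x * (levicivita g e q c x * g p e x) * minv g q b x)
      = ∑ e, levicivita g a e c x * minv g e b x := by
    calc (∑ p, ∑ q, ∑ e, minv g a p x * (levicivita g e q c x * g p e x) * minv g q b x)
        = ∑ q, ∑ e, (∑ p, minv g a p x * g p e x) * (levicivita g e q c x * minv g q b x) := by
          rw [Finset.sum_comm]
          refine Finset.sum_congr rfl fun q _ => ?_
          rw [Finset.sum_comm]
          refine Finset.sum_congr rfl fun e _ => ?_
          rw [Finset.sum_mul]
          exact Finset.sum_congr rfl fun p _ => by ring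
      _ = ∑ q, ∑ e, kd a e * (levicivita g e q c x * minv g q b x) := by
          refine Finset.sum_congr rfl fun q _ => Finset.sum_congr rfl fun e _ => ?_
          rw [minv_g hg hx a e]
      _ = ∑ q, levicivita g a q c x * minv g q b x := by
          refine Finset.sum_congr rfl fun q _ => ?_
          rw [sum_kd_mul (fun e => levicivita g e q c x * minv g q b x) a]
      _ = ∑ e, levicivita g a e c x * minv g e b x := rfl
  rw [expand, h1, h2]
  ring

/-! ### Algebraic core of the Riemann antisymmetry computation -/

lemma star_algebra {N : ℕ} (Γv : Fin N → Fin N → Fin N → ℝ)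
    (dΓ : Fin N → Fin N → Fin N → Fin N → ℝ) (G : Fin N → Fin N → ℝ)
    (c b e d : Fin N)
    (h : -(∑ f, (dΓ e c f d * G f b + Γv c f d *
           (-(∑ p, (Γv f p e * G p b)) - ∑ p, (Γv b p e * G f p))))
        - (∑ f, (dΓ e b f d * G c f + Γv b f d *
           (-(∑ p, (Γv c p e * G p f)) - ∑ p, (Γv f p e * G c p))))
       = -(∑ f, (dΓ d c f e * G f b + Γv c f e *
           (-(∑ p, (Γv f p d * G p b)) - ∑ p, (Γv b p d * G f p))))
        - (∑ f, (dΓ d b f e * G c f + Γv b f e *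
           (-(∑ p, (Γv c p d * G p f)) - ∑ p, (Γv f p d * G c p))))) :
    ∑ f, ((dΓ e c f d - dΓ d c f e
          + ∑ p, (Γv c p e * Γv p f d - Γv c p d * Γv p f e)) * G f b
        + (dΓ e b f d - dΓ d b f e
          + ∑ p, (Γv b p e * Γv p f d - Γv b p d * Γv p f e)) * G c f) = 0 := by
  simp only [mul_sub, mul_neg, sub_mul, add_mul, neg_mul, Finset.mul_sum,
    Finset.sum_mul, Finset.sum_add_distrib, Finset.sum_sub_distrib,
    Finset.sum_neg_distrib, mul_assoc] at h ⊢
  have r1 : ∑ f, ∑ p, Γv c p e * (Γv p f d * G f b)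
      = ∑ f, ∑ p, Γv c f e * (Γv f p d * G p b) :=
    sum2_swap (fun f p => Γv c p e * (Γv p f d * G f b))
  have r2 : ∑ f, ∑ p, Γv c p d * (Γv p f e * G f b)
      = ∑ f, ∑ p, Γv c f d * (Γv f p e * G p b) :=
    sum2_swap (fun f p => Γv c p d * (Γv p f e * G f b))
  have r3 : ∑ f, ∑ p, Γv b p e * (Γv p f d * G c f)
      = ∑ f, ∑ p, Γv b f e * (Γv f p d * G c p) :=
    sum2_swap (fun f p => Γv b p e * (Γv p f d * G c f))
  have r4 : ∑ f, ∑ p, Γv b p d * (Γv p f e * G c f)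
      = ∑ f, ∑ p, Γv b f d * (Γv f p e * G c p) :=
    sum2_swap (fun f p => Γv b p d * (Γv p f e * G c f))
  have r5 : ∑ f, ∑ p, Γv b f d * (Γv c p e * G p f)
      = ∑ f, ∑ p, Γv c f e * (Γv b p d * G f p) := by
    rw [sum2_swap (fun f p => Γv b f d * (Γv c p e * G p f))]
    exact Finset.sum_congr rfl fun f _ => Finset.sum_congr rfl fun p _ => by ring
  have r6 : ∑ f, ∑ p, Γv b f e * (Γv c p d * G p f)
      = ∑ f, ∑ p, Γv c f d * (Γv b p e * G f p) := by
    rw [sum2_swap (fun f p => Γv b f e * (Γv c p d * G p f))]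
    exact Finset.sum_congr rfl fun f _ => Finset.sum_congr rfl fun p _ => by ring
  linarith [h, r1, r2, r3, r4, r5, r6]

/-! ### Antisymmetry of the Riemann tensor with one index raised -/

lemma riemann_skew (hUo : IsOpen U) {g : Fin n → Fin n → (Fin n → ℝ) → ℝ}
    (hg : IsMetric U g) (hx : x ∈ U) (c b e d : Fin n) :
    ∑ f, (curv (levicivita g) c f e d x * minv g f b x
      + curv (levicivita g) b f e d x * minv g c f x) = 0 := by
  -- second covariant derivative of the inverse metric, expanded
  have keyA : ∀ (e d c b : Fin n), pd e (fun y => pd d (minv g c b) y) x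
      = -(∑ f, (pd e (levicivita g c f d) x * minv g f b x
          + levicivita g c f d x * pd e (minv g f b) x))
        - (∑ f, (pd e (levicivita g b f d) x * minv g c f x
          + levicivita g b f d x * pd e (minv g c f) x)) := by
    intro e d c b
    have h1 : pd e (fun y => pd d (minv g c b) y) x
        = pd e (fun y => -(∑ f, levicivita g c f d y * minv g f b y)
            - ∑ f, levicivita g b f d y * minv g c f y) x :=
      pd_congr hUo hx (fun y hy => lc_compat_upper hUo hg hy d c b) e
    rw [h1]
    have d1 : DifferentiableAt ℝ (fun y => ∑ f, levicivita g c f d y * minv g f b y) x :=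
      DifferentiableAt.fun_sum fun f _ => (lc_diff hUo hg hx c f d).mul
        ((minv_cd hUo hg hx f b).differentiableAt (by simp))
    have d2 : DifferentiableAt ℝ (fun y => ∑ f, levicivita g b f d y * minv g c f y) x :=
      DifferentiableAt.fun_sum fun f _ => (lc_diff hUo hg hx b f d).mul
        ((minv_cd hUo hg hx c f).differentiableAt (by simp))
    rw [pd_sub d1.fun_neg d2, pd_neg (f := fun y => ∑ f, levicivita g c f d y * minv g f b y)]
    rw [pd_sum _ _ (fun f _ => (lc_diff hUo hg hx c f d).fun_mul
      ((minv_cd hUo hg hx f b).differentiableAt (by simp))),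
      pd_sum _ _ (fun f _ => (lc_diff hUo hg hx b f d).fun_mul
      ((minv_cd hUo hg hx c f).differentiableAt (by simp)))]
    congr 1
    · congr 1
      exact Finset.sum_congr rfl fun f _ => pd_mul (lc_diff hUo hg hx c f d)
        ((minv_cd hUo hg hx f b).differentiableAt (by simp)) e
    · exact Finset.sum_congr rfl fun f _ => pd_mul (lc_diff hUo hg hx b f d)
        ((minv_cd hUo hg hx c f).differentiableAt (by simp)) e
  -- symmetry of second derivatives
  have hswap : ∀ (e d c b : Fin n),
      pd e (fun y => pd d (minv g c b) y) x = pd d (fun y => pd e (minv g c b) y) x :=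
    fun e d c b => pd_comm (minv_cd hUo hg hx c b) e d
  -- the hypothesis for star_algebra
  have h := (keyA e d c b).symm.trans ((hswap e d c b).trans (keyA d e c b))
  simp only [show ∀ u α β, pd u (minv g α β) x
      = -(∑ p, levicivita g α p u x * minv g p β x)
        - ∑ p, levicivita g β p u x * minv g α p x from
    fun u α β => lc_compat_upper hUo hg hx u α β] at h
  have halg := star_algebra (fun a b c => levicivita g a b c x)
    (fun u a b c => pd u (levicivita g a b c) x) (fun a b => minv g a b x) c b e d ?_
  · rw [← halg]
    refine Finset.sum_congr rfl fun f _ => ?_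
    simp only [curv]
  · exact h

/-! ### First Bianchi identity and curvature traces for torsion-free connections -/

lemma curv_antisym {Γ : Fin n → Fin n → Fin n → (Fin n → ℝ) → ℝ} (a b c d : Fin n) :
    curv Γ a b c d x = -curv Γ a b d c x := by
  simp only [curv]
  have h : (∑ e, (Γ a e c x * Γ e b d x - Γ a e d x * Γ e b c x))
      = -∑ e, (Γ a e d x * Γ e b c x - Γ a e c x * Γ e b d x) := by
    rw [← Finset.sum_neg_distrib]
    exact Finset.sum_congr rfl fun e _ => by ring
  rw [h]; ring

lemma bianchi1 (hUo : IsOpen U) {Γ : Fin n → Fin n → Fin n → (Fin n → ℝ) → ℝ}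
    (hsym : ∀ a b c, ∀ y ∈ U, Γ a b c y = Γ a c b y) (hx : x ∈ U) (a b c d : Fin n) :
    curv Γ a b c d x + curv Γ a c d b x + curv Γ a d b c x = 0 := by
  simp only [curv]
  have p1 : pd c (Γ a b d) x = pd c (Γ a d b) x :=
    pd_congr hUo hx (fun y hy => hsym a b d y hy) c
  have p2 : pd d (Γ a b c) x = pd d (Γ a c b) x :=
    pd_congr hUo hx (fun y hy => hsym a b c y hy) d
  have p3 : pd b (Γ a c d) x = pd b (Γ a d c) x :=
    pd_congr hUo hx (fun y hy => hsym a c d y hy) b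
  have hsum : (∑ e, (Γ a e c x * Γ e b d x - Γ a e d x * Γ e b c x))
      + (∑ e, (Γ a e d x * Γ e c b x - Γ a e b x * Γ e c d x))
      + (∑ e, (Γ a e b x * Γ e d c x - Γ a e c x * Γ e d b x)) = 0 := by
    rw [← Finset.sum_add_distrib, ← Finset.sum_add_distrib]
    refine Finset.sum_eq_zero fun e _ => ?_
    rw [hsym e b d x hx, hsym e b c x hx, hsym e c d x hx]
    ring
  linarith [hsum]

lemma curv_trace_first (hUo : IsOpen U) {Γ : Fin n → Fin n → Fin n → (Fin n → ℝ) → ℝ}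
    (hsym : ∀ a b c, ∀ y ∈ U, Γ a b c y = Γ a c b y) (hx : x ∈ U) (c d : Fin n) :
    ∑ a, curv Γ a a c d x = ricci Γ c d x - ricci Γ d c x := by
  have h1 : ∀ a : Fin n, curv Γ a a c d x
      = curv Γ a c a d x - curv Γ a d a c x := by
    intro a
    have hb := bianchi1 hUo hsym hx a a c d
    have h2 : curv Γ a c d a x = -curv Γ a c a d x := by
      rw [curv_antisym a c d a]
    have h3 : curv Γ a d a c x = curv Γ a d a c x := rfl
    linarith [hb, h2]
  rw [Finset.sum_congr rfl fun a _ => h1 a, Finset.sum_sub_distrib]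
  rfl

/-! ### Symmetry of the Ricci tensor of a Levi-Civita connection -/

lemma sum4_swap (F : Fin n → Fin n → Fin n → Fin n → ℝ) :
    ∑ a, ∑ f, ∑ p, ∑ q, F a f p q = ∑ a, ∑ f, ∑ p, ∑ q, F p q a f := by
  calc ∑ a, ∑ f, ∑ p, ∑ q, F a f p q
      = ∑ a, ∑ p, ∑ f, ∑ q, F a f p q :=
        Finset.sum_congr rfl fun a _ => Finset.sum_comm
    _ = ∑ p, ∑ a, ∑ f, ∑ q, F a f p q := Finset.sum_comm
    _ = ∑ p, ∑ a, ∑ q, ∑ f, F a f p q :=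
        Finset.sum_congr rfl fun p _ => Finset.sum_congr rfl fun a _ => Finset.sum_comm
    _ = ∑ p, ∑ q, ∑ a, ∑ f, F a f p q :=
        Finset.sum_congr rfl fun p _ => Finset.sum_comm

lemma lc_trace (hUo : IsOpen U) {g : Fin n → Fin n → (Fin n → ℝ) → ℝ}
    (hg : IsMetric U g) {y : Fin n → ℝ} (hy : y ∈ U) (d : Fin n) :
    ∑ a, levicivita g a a d y
      = (1/2) * ∑ a, ∑ f, minv g a f y * pd d (g a f) y := by
  simp only [levicivita]
  have step1 : ∑ a, ((1/2 : ℝ) * ∑ f, minv g a f y *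
        (pd a (g f d) y + pd d (g a f) y - pd f (g a d) y))
      = (1/2) * ((∑ a, ∑ f, minv g a f y * pd a (g f d) y)
        + (∑ a, ∑ f, minv g a f y * pd d (g a f) y)
        - (∑ a, ∑ f, minv g a f y * pd f (g a d) y)) := by
    rw [← Finset.mul_sum]
    congr 1
    rw [← Finset.sum_add_distrib, ← Finset.sum_sub_distrib]
    refine Finset.sum_congr rfl fun a _ => ?_
    rw [← Finset.sum_add_distrib, ← Finset.sum_sub_distrib]
    refine Finset.sum_congr rfl fun f _ => by ring
  rw [step1]
  have e1 : (∑ a, ∑ f, minv g a f y * pd a (g f d) y)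
      = ∑ a, ∑ f, minv g a f y * pd f (g a d) y := by
    rw [sum2_swap (fun a f => minv g a f y * pd a (g f d) y)]
    exact Finset.sum_congr rfl fun a _ => Finset.sum_congr rfl fun f _ => by
      rw [minv_symm hg hy f a]
  rw [e1]
  ring

lemma lc_curv_trace_zero (hUo : IsOpen U) {g : Fin n → Fin n → (Fin n → ℝ) → ℝ}
    (hg : IsMetric U g) (hx : x ∈ U) (c d : Fin n) :
    ∑ a, curv (levicivita g) a a c d x = 0 := by
  simp only [curv]
  -- quadratic terms vanish
  have q : ∑ a, ∑ e, (levicivita g a e c x * levicivita g e a d x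
      - levicivita g a e d x * levicivita g e a c x) = 0 := by
    have qs : (∑ a, ∑ e, (levicivita g a e c x * levicivita g e a d x
          - levicivita g a e d x * levicivita g e a c x))
        = (∑ a, ∑ e, levicivita g a e c x * levicivita g e a d x)
          - (∑ a, ∑ e, levicivita g a e d x * levicivita g e a c x) := by
      rw [← Finset.sum_sub_distrib]
      exact Finset.sum_congr rfl fun a _ => Finset.sum_sub_distrib ..
    rw [qs]
    rw [sum2_swap (fun a e => levicivita g a e c x * levicivita g e a d x)]
    rw [sub_eq_zero]
    exact Finset.sum_congr rfl fun a _ => Finset.sum_congr rfl fun e _ => by ring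
  -- derivative terms
  have hdiffsum : ∀ u : Fin n, DifferentiableAt ℝ
      (fun y => ∑ a, levicivita g a a u y) x :=
    fun u => DifferentiableAt.fun_sum fun a _ => lc_diff hUo hg hx a a u
  have hps : ∀ u v : Fin n, ∑ a, pd u (levicivita g a a v) x
      = pd u (fun y => ∑ a, levicivita g a a v y) x := by
    intro u v
    rw [pd_sum _ _ (fun a _ => lc_diff hUo hg hx a a v)]
  have hsplit : (∑ a, (pd c (levicivita g a a d) x - pd d (levicivita g a a c) x
        + ∑ e, (levicivita g a e c x * levicivita g e a d x
          - levicivita g a e d x * levicivita g e a c x)))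
      = ((∑ a, pd c (levicivita g a a d) x) - ∑ a, pd d (levicivita g a a c) x)
        + ∑ a, ∑ e, (levicivita g a e c x * levicivita g e a d x
          - levicivita g a e d x * levicivita g e a c x) := by
    rw [← Finset.sum_sub_distrib, ← Finset.sum_add_distrib]
  rw [hsplit, q, add_zero, hps, hps, sub_eq_zero]
  -- now prove symmetry of pd c of the trace in (c,d)
  have hrepl : ∀ u v : Fin n, pd u (fun y => ∑ a, levicivita g a a v y) x
      = pd u (fun y => (1/2) * ∑ a, ∑ f, minv g a f y * pd v (g a f) y) x := by
    intro u v
    exact pd_congr hUo hx (fun y hy => lc_trace hUo hg hy v) u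
  rw [hrepl, hrepl]
  -- differentiabilities
  have dmin : ∀ a f : Fin n, DifferentiableAt ℝ (minv g a f) x :=
    fun a f => (minv_cd hUo hg hx a f).differentiableAt (by simp)
  have dpg : ∀ (v : Fin n) (a f : Fin n), DifferentiableAt ℝ (fun y => pd v (g a f) y) x :=
    fun v a f => (contDiffAt_pd (g_cd hUo hg hx a f) v).differentiableAt (by simp)
  have expand : ∀ u v : Fin n,
      pd u (fun y => (1/2) * ∑ a, ∑ f, minv g a f y * pd v (g a f) y) x
      = (1/2) * ∑ a, ∑ f, (pd u (minv g a f) x * pd v (g a f) x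
          + minv g a f x * pd u (fun y => pd v (g a f) y) x) := by
    intro u v
    rw [pd_const_mul (by exact DifferentiableAt.fun_sum fun a _ =>
      DifferentiableAt.fun_sum fun f _ => (dmin a f).fun_mul (dpg v a f))]
    congr 1
    rw [pd_sum _ _ (fun a _ => DifferentiableAt.fun_sum fun f _ => (dmin a f).fun_mul (dpg v a f))]
    refine Finset.sum_congr rfl fun a _ => ?_
    rw [pd_sum _ _ (fun f _ => (dmin a f).fun_mul (dpg v a f))]
    exact Finset.sum_congr rfl fun f _ => pd_mul (dmin a f) (dpg v a f) u
  rw [expand, expand]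
  -- split into first-derivative part and second-derivative part
  have split2 : ∀ u v : Fin n,
      (∑ a, ∑ f, (pd u (minv g a f) x * pd v (g a f) x
          + minv g a f x * pd u (fun y => pd v (g a f) y) x))
      = (∑ a, ∑ f, pd u (minv g a f) x * pd v (g a f) x)
        + ∑ a, ∑ f, minv g a f x * pd u (fun y => pd v (g a f) y) x := by
    intro u v
    rw [← Finset.sum_add_distrib]
    exact Finset.sum_congr rfl fun a _ => Finset.sum_add_distrib
  rw [split2, split2]
  -- second-derivative parts agree by Schwarz
  have schwarz : (∑ a, ∑ f, minv g a f x * pd c (fun y => pd d (g a f) y) x)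
      = ∑ a, ∑ f, minv g a f x * pd d (fun y => pd c (g a f) y) x := by
    refine Finset.sum_congr rfl fun a _ => Finset.sum_congr rfl fun f _ => ?_
    rw [pd_comm (g_cd hUo hg hx a f) c d]
  -- first-derivative parts agree by the 4-index swap
  have first : (∑ a, ∑ f, pd c (minv g a f) x * pd d (g a f) x)
      = ∑ a, ∑ f, pd d (minv g a f) x * pd c (g a f) x := by
    have sub : ∀ u v : Fin n, (∑ a, ∑ f, pd u (minv g a f) x * pd v (g a f) x)
        = -∑ a, ∑ f, ∑ p, ∑ q, minv g a p x * pd u (g p q) x * minv g q f x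
            * pd v (g a f) x := by
      intro u v
      rw [← Finset.sum_neg_distrib]
      refine Finset.sum_congr rfl fun a _ => ?_
      rw [← Finset.sum_neg_distrib]
      refine Finset.sum_congr rfl fun f _ => ?_
      rw [pd_minv hUo hg hx u a f, neg_mul, Finset.sum_mul]
      congr 1
      exact Finset.sum_congr rfl fun p _ => Finset.sum_mul ..
    rw [sub, sub]
    congr 1
    rw [sum4_swap (fun a f p q => minv g a p x * pd c (g p q) x * minv g q f x
      * pd d (g a f) x)]
    refine Finset.sum_congr rfl fun a _ => Finset.sum_congr rfl fun f _ =>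
      Finset.sum_congr rfl fun p _ => Finset.sum_congr rfl fun q _ => ?_
    rw [minv_symm hg hx p a, minv_symm hg hx f q]
    ring
  rw [schwarz, first]

lemma ricci_lc_symm (hUo : IsOpen U) {g : Fin n → Fin n → (Fin n → ℝ) → ℝ}
    (hg : IsMetric U g) (hx : x ∈ U) (b d : Fin n) :
    ricci (levicivita g) b d x = ricci (levicivita g) d b x := by
  have h := curv_trace_first hUo (fun a b c y hy => lc_symm hUo hg hy a b c) hx b d
  rw [lc_curv_trace_zero hUo hg hx b d] at h
  linarith [h]

lemma schouten_lc (hUo : IsOpen U) {g : Fin n → Fin n → (Fin n → ℝ) → ℝ}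
    (hg : IsMetric U g) (hx : x ∈ U) (a b : Fin n) :
    schouten (levicivita g) a b x
      = (1/((n : ℝ) - 1)) * ricci (levicivita g) a b x := by
  rw [schouten, ricci_lc_symm hUo hg hx b a]
  ring

lemma schouten_lc_symm (hUo : IsOpen U) {g : Fin n → Fin n → (Fin n → ℝ) → ℝ}
    (hg : IsMetric U g) (hx : x ∈ U) (a b : Fin n) :
    schouten (levicivita g) a b x = schouten (levicivita g) b a x := by
  rw [schouten_lc hUo hg hx, schouten_lc hUo hg hx, ricci_lc_symm hUo hg hx]

/-! ### Projective invariance of the Weyl tensor -/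

section Proj
variable {Γ Γt : Fin n → Fin n → Fin n → (Fin n → ℝ) → ℝ}
  {A : Fin n → (Fin n → ℝ) → ℝ}

lemma sum_kd_self (C : ℝ) : ∑ _a : Fin n, kd _a _a * C = (n : ℝ) * C := by
  simp [kd, Finset.sum_const, Finset.card_univ, nsmul_eq_mul]

lemma PI_pd (hUo : IsOpen U) (hx : x ∈ U)
    (hrel : ∀ a b c, ∀ y ∈ U, Γt a b c y = Γ a b c y + kd a c * A b y + kd a b * A c y)
    (hΓd : ∀ a b c, DifferentiableAt ℝ (Γ a b c) x)
    (hAd : ∀ a, DifferentiableAt ℝ (A a) x) (u a b c : Fin n) :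
    pd u (Γt a b c) x = pd u (Γ a b c) x + kd a c * pd u (A b) x
      + kd a b * pd u (A c) x := by
  have h1 : pd u (Γt a b c) x
      = pd u (fun y => Γ a b c y + kd a c * A b y + kd a b * A c y) x :=
    pd_congr hUo hx (fun y hy => hrel a b c y hy) u
  rw [h1, pd_add ((hΓd a b c).fun_add (((hAd b).const_mul _))) ((hAd c).const_mul _),
    pd_add (hΓd a b c) ((hAd b).const_mul _), pd_const_mul (hAd b),
    pd_const_mul (hAd c)]

lemma PI_quad (hx : x ∈ U)
    (hrel : ∀ a b c, ∀ y ∈ U, Γt a b c y = Γ a b c y + kd a c * A b y + kd a b * A c y)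
    (a b c d : Fin n) :
    ∑ e, Γt a e c x * Γt e b d x
      = (∑ e, Γ a e c x * Γ e b d x) + Γ a d c x * A b x + Γ a b c x * A d x
        + kd a c * (∑ e, Γ e b d x * A e x)
        + 2 * (kd a c * (A b x * A d x))
        + A c x * Γ a b d x + kd a d * (A c x * A b x)
        + kd a b * (A c x * A d x) := by
  have step1 : ∑ e, Γt a e c x * Γt e b d x
      = ∑ e, ((Γ a e c x * Γ e b d x)
        + ((Γ a e c x * A b x) * kd e d)
        + ((Γ a e c x * A d x) * kd e b)
        + (kd a c * (Γ e b d x * A e x))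
        + ((kd a c * (A b x * A e x)) * kd e d)
        + ((kd a c * (A d x * A e x)) * kd e b)
        + (kd a e * (A c x * Γ e b d x))
        + (kd a e * (kd e d * (A c x * A b x)))
        + (kd a e * (kd e b * (A c x * A d x)))) := by
    refine Finset.sum_congr rfl fun e _ => ?_
    rw [hrel a e c x hx, hrel e b d x hx]
    ring
  rw [step1]
  simp only [Finset.sum_add_distrib]
  rw [sum_mul_kd' (fun e => Γ a e c x * A b x) d,
    sum_mul_kd' (fun e => Γ a e c x * A d x) b,
    ← Finset.mul_sum,
    sum_mul_kd' (fun e => kd a c * (A b x * A e x)) d,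
    sum_mul_kd' (fun e => kd a c * (A d x * A e x)) b,
    sum_kd_mul (fun e => A c x * Γ e b d x) a,
    sum_kd_mul (fun e => kd e d * (A c x * A b x)) a,
    sum_kd_mul (fun e => kd e b * (A c x * A d x)) a]
  ring

lemma PI_curv (hUo : IsOpen U) (hx : x ∈ U)
    (hrel : ∀ a b c, ∀ y ∈ U, Γt a b c y = Γ a b c y + kd a c * A b y + kd a b * A c y)
    (hΓd : ∀ a b c, DifferentiableAt ℝ (Γ a b c) x)
    (hAd : ∀ a, DifferentiableAt ℝ (A a) x)
    (hΓsym : ∀ a b c, Γ a b c x = Γ a c b x)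
    (a b c d : Fin n) :
    curv Γt a b c d x = curv Γ a b c d x
      - kd a c * (pd d (A b) x - (∑ e, Γ e b d x * A e x) - A b x * A d x)
      + kd a d * (pd c (A b) x - (∑ e, Γ e b c x * A e x) - A b x * A c x)
      + kd a b * (pd c (A d) x - pd d (A c) x) := by
  simp only [curv]
  have hsplit : ∀ (Θ : Fin n → Fin n → Fin n → (Fin n → ℝ) → ℝ),
      ∑ e, (Θ a e c x * Θ e b d x - Θ a e d x * Θ e b c x)
      = (∑ e, Θ a e c x * Θ e b d x) - ∑ e, Θ a e d x * Θ e b c x :=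
    fun Θ => Finset.sum_sub_distrib ..
  rw [hsplit Γt, hsplit Γ, PI_quad hx hrel a b c d, PI_quad hx hrel a b d c,
    PI_pd hUo hx hrel hΓd hAd c a b d, PI_pd hUo hx hrel hΓd hAd d a b c,
    hΓsym a d c, hΓsym a c d]
  ring

lemma PI_ricci (hUo : IsOpen U) (hx : x ∈ U)
    (hrel : ∀ a b c, ∀ y ∈ U, Γt a b c y = Γ a b c y + kd a c * A b y + kd a b * A c y)
    (hΓd : ∀ a b c, DifferentiableAt ℝ (Γ a b c) x)
    (hAd : ∀ a, DifferentiableAt ℝ (A a) x)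
    (hΓsym : ∀ a b c, Γ a b c x = Γ a c b x)
    (b d : Fin n) :
    ricci Γt b d x = ricci Γ b d x
      - ((n : ℝ) - 1) * (pd d (A b) x - (∑ e, Γ e b d x * A e x) - A b x * A d x)
      + (pd b (A d) x - pd d (A b) x) := by
  simp only [ricci]
  rw [Finset.sum_congr rfl fun a _ => PI_curv hUo hx hrel hΓd hAd hΓsym a b a d]
  simp only [Finset.sum_add_distrib, Finset.sum_sub_distrib]
  rw [sum_kd_self (pd d (A b) x - (∑ e, Γ e b d x * A e x) - A b x * A d x),
    sum_kd_mul' (fun a => pd a (A b) x - (∑ e, Γ e b a x * A e x) - A b x * A a x) d,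
    sum_kd_mul' (fun a => pd a (A d) x - pd d (A a) x) b]
  ring

lemma PI_schouten (hUo : IsOpen U) (hx : x ∈ U) (hn : 3 ≤ n)
    (hrel : ∀ a b c, ∀ y ∈ U, Γt a b c y = Γ a b c y + kd a c * A b y + kd a b * A c y)
    (hΓd : ∀ a b c, DifferentiableAt ℝ (Γ a b c) x)
    (hAd : ∀ a, DifferentiableAt ℝ (A a) x)
    (hΓsym : ∀ a b c, Γ a b c x = Γ a c b x)
    (u v : Fin n) :
    schouten Γt u v x = schouten Γ u v x
      - (pd u (A v) x - (∑ e, Γ e v u x * A e x) - A v x * A u x) := by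
  have hn1 : ((n : ℝ) - 1) ≠ 0 := by
    have : (3 : ℝ) ≤ (n : ℝ) := by exact_mod_cast hn
    linarith
  have hn2 : ((n : ℝ) + 1) ≠ 0 := by positivity
  have hsymsum : ∀ b d : Fin n, (∑ e, Γ e b d x * A e x) = ∑ e, Γ e d b x * A e x :=
    fun b d => Finset.sum_congr rfl fun e _ => by rw [hΓsym e b d]
  rw [schouten, schouten, PI_ricci hUo hx hrel hΓd hAd hΓsym u v,
    PI_ricci hUo hx hrel hΓd hAd hΓsym v u, hsymsum v u]
  field_simp
  ring

lemma PI_weyl (hUo : IsOpen U) (hx : x ∈ U) (hn : 3 ≤ n)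
    (hrel : ∀ a b c, ∀ y ∈ U, Γt a b c y = Γ a b c y + kd a c * A b y + kd a b * A c y)
    (hΓd : ∀ a b c, DifferentiableAt ℝ (Γ a b c) x)
    (hAd : ∀ a, DifferentiableAt ℝ (A a) x)
    (hΓsym : ∀ a b c, Γ a b c x = Γ a c b x)
    (a b c d : Fin n) :
    weyl Γt a b c d x = weyl Γ a b c d x := by
  rw [weyl, weyl, PI_curv hUo hx hrel hΓd hAd hΓsym a b c d,
    PI_schouten hUo hx hn hrel hΓd hAd hΓsym d b,
    PI_schouten hUo hx hn hrel hΓd hAd hΓsym c b,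
    PI_schouten hUo hx hn hrel hΓd hAd hΓsym c d,
    PI_schouten hUo hx hn hrel hΓd hAd hΓsym d c,
    show (∑ e, Γ e d c x * A e x) = ∑ e, Γ e c d x * A e x from
      Finset.sum_congr rfl fun e _ => by rw [hΓsym e d c]]
  ring

end Proj

/-! ### Weyl decomposition and trace identities for Levi-Civita -/

lemma lc_decomp (hUo : IsOpen U) {g : Fin n → Fin n → (Fin n → ℝ) → ℝ}
    (hg : IsMetric U g) (hx : x ∈ U) (α β u v : Fin n) :
    curv (levicivita g) α β u v x = weyl (levicivita g) α β u v x
      + kd α u * schouten (levicivita g) v β x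
      - kd α v * schouten (levicivita g) u β x := by
  rw [weyl, schouten_lc_symm hUo hg hx u v]
  ring

lemma E1 (hUo : IsOpen U) {g : Fin n → Fin n → (Fin n → ℝ) → ℝ}
    (hg : IsMetric U g) (hx : x ∈ U) (c b e d : Fin n) :
    (∑ f, weyl (levicivita g) c f e d x * minv g f b x)
      + (∑ f, weyl (levicivita g) b f e d x * minv g c f x)
    = - (kd c e * ∑ f, schouten (levicivita g) d f x * minv g f b x)
      + kd c d * (∑ f, schouten (levicivita g) e f x * minv g f b x)
      - kd b e * (∑ f, schouten (levicivita g) d f x * minv g c f x)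
      + kd b d * (∑ f, schouten (levicivita g) e f x * minv g c f x) := by
  have hstar := riemann_skew hUo hg hx c b e d
  have hexp : ∑ f, (curv (levicivita g) c f e d x * minv g f b x
      + curv (levicivita g) b f e d x * minv g c f x)
      = ((∑ f, weyl (levicivita g) c f e d x * minv g f b x)
        + kd c e * (∑ f, schouten (levicivita g) d f x * minv g f b x)
        - kd c d * (∑ f, schouten (levicivita g) e f x * minv g f b x))
      + ((∑ f, weyl (levicivita g) b f e d x * minv g c f x)
        + kd b e * (∑ f, schouten (levicivita g) d f x * minv g c f x)
        - kd b d * (∑ f, schouten (levicivita g) e f x * minv g c f x)) := by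
    simp only [Finset.mul_sum, ← Finset.sum_sub_distrib, ← Finset.sum_add_distrib]
    refine Finset.sum_congr rfl fun f _ => ?_
    rw [lc_decomp hUo hg hx c f e d, lc_decomp hUo hg hx b f e d]
    ring
  rw [hexp] at hstar
  linarith [hstar]

lemma traceW (hUo : IsOpen U) {g : Fin n → Fin n → (Fin n → ℝ) → ℝ}
    (hg : IsMetric U g) (hx : x ∈ U) (hn : 3 ≤ n) (c e : Fin n) :
    ∑ a, ∑ f, weyl (levicivita g) c a f e x * minv g a f x
      = -(n : ℝ) * (∑ a, schouten (levicivita g) e a x * minv g a c x)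
        + kd c e * (∑ a, ∑ f, schouten (levicivita g) f a x * minv g a f x) := by
  have hn1 : ((n : ℝ) - 1) ≠ 0 := by
    have : (3 : ℝ) ≤ (n : ℝ) := by exact_mod_cast hn
    linarith
  -- decompose W in the double sum
  have h0 : ∑ a, ∑ f, weyl (levicivita g) c a f e x * minv g a f x
      = (∑ a, ∑ f, curv (levicivita g) c a f e x * minv g a f x)
        - (∑ a, schouten (levicivita g) e a x * minv g a c x)
        + kd c e * (∑ a, ∑ f, schouten (levicivita g) f a x * minv g a f x) := by
    simp only [Finset.mul_sum, ← Finset.sum_sub_distrib, ← Finset.sum_add_distrib]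
    refine Finset.sum_congr rfl fun a _ => ?_
    have inner : ∀ f, weyl (levicivita g) c a f e x * minv g a f x
        = curv (levicivita g) c a f e x * minv g a f x
          - kd c f * (schouten (levicivita g) e a x * minv g a f x)
          + kd c e * (schouten (levicivita g) f a x * minv g a f x) := by
      intro f
      have := lc_decomp hUo hg hx c a f e
      have hW : weyl (levicivita g) c a f e x = curv (levicivita g) c a f e x
          - kd c f * schouten (levicivita g) e a x
          + kd c e * schouten (levicivita g) f a x := by linarith [this]
      rw [hW]; ring
    rw [Finset.sum_congr rfl fun f _ => inner f]
    simp only [Finset.sum_add_distrib, Finset.sum_sub_distrib]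
    rw [sum_kd_mul (fun f => schouten (levicivita g) e a x * minv g a f x) c]
  -- curvature double trace via riemann_skew
  have h1 : ∑ a, ∑ f, curv (levicivita g) c a f e x * minv g a f x
      = -∑ a, ricci (levicivita g) a e x * minv g c a x := by
    rw [Finset.sum_comm]
    have per : ∀ m : Fin n, ∑ a, curv (levicivita g) c a m e x * minv g a m x
        = -∑ a, curv (levicivita g) m a m e x * minv g c a x := by
      intro m
      have hs := riemann_skew hUo hg hx c m m e
      rw [Finset.sum_add_distrib] at hs
      linarith [hs]
    rw [Finset.sum_congr rfl fun m _ => per m, Finset.sum_neg_distrib]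
    congr 1
    rw [Finset.sum_comm]
    refine Finset.sum_congr rfl fun a _ => ?_
    rw [← Finset.sum_mul]
    rfl
  -- Ricci in terms of Schouten
  have h2 : ∀ a : Fin n, ricci (levicivita g) a e x
      = ((n : ℝ) - 1) * schouten (levicivita g) a e x := by
    intro a
    rw [schouten_lc hUo hg hx a e]
    field_simp
  have h3 : ∑ a, schouten (levicivita g) a e x * minv g c a x
      = ∑ a, schouten (levicivita g) e a x * minv g a c x := by
    refine Finset.sum_congr rfl fun a _ => ?_
    rw [schouten_lc_symm hUo hg hx a e, minv_symm hg hx c a]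
  have h4 : ∑ a, ricci (levicivita g) a e x * minv g c a x
      = ((n : ℝ) - 1) * ∑ a, schouten (levicivita g) e a x * minv g a c x := by
    rw [← h3, Finset.mul_sum]
    exact Finset.sum_congr rfl fun a _ => by rw [h2 a]; ring
  rw [h0, h1, h4]
  ring

end MetrisAux
end MetrisAux

/-- (Theorem 3.7) If the projective class of `Γ̃` on a nonempty convex
open `U ⊆ ℝⁿ` (`n ≥ 3`) contains a Levi-Civita connection, then for each pair of
distinct indices `e ≠ d` and each `x ∈ U` the endomorphism `T_{[ed]}(x)` of symmetric
`n×n` matrices is singular, i.e. not injective (it kills some nonzero symmetric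
matrix). -/
theorem metrisable_implies_T_singular {n : ℕ} (hn : 3 ≤ n)
    (U : Set (Fin n → ℝ)) (hUo : IsOpen U) (hUc : Convex ℝ U) (hUne : U.Nonempty)
    (Γt : Fin n → Fin n → Fin n → (Fin n → ℝ) → ℝ) (hΓt : IsConn U Γt)
    (hmet : ∃ ghat : Fin n → Fin n → (Fin n → ℝ) → ℝ,
      IsMetric U ghat ∧ ProjEquiv U (levicivita ghat) Γt) :
    ∀ x ∈ U, ∀ e d : Fin n, e ≠ d →
      ∃ κ : Matrix (Fin n) (Fin n) ℝ, κ.IsSymm ∧ κ ≠ 0 ∧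
        ∀ c b : Fin n, (∑ a, ∑ f, Ttensor Γt e d c b a f x * κ a f) = 0 := by
  classical
  intro x hx e d _
  obtain ⟨g, hg, A, hAs, hrel⟩ := hmet
  have hn0 : ((n : ℝ)) ≠ 0 := by positivity
  have hAd : ∀ a, DifferentiableAt ℝ (A a) x := fun a =>
    ((hAs a).contDiffAt (hUo.mem_nhds hx)).differentiableAt (by simp)
  have hΓd : ∀ a b c, DifferentiableAt ℝ (Γt a b c) x := fun a b c =>
    ((hΓt.1 a b c).contDiffAt (hUo.mem_nhds hx)).differentiableAt (by simp)
  have hΓsym : ∀ a b c, Γt a b c x = Γt a c b x := fun a b c => hΓt.2 a b c x hx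
  have hWeq : ∀ a b c d : Fin n, weyl Γt a b c d x
      = weyl (levicivita g) a b c d x := fun a b c d =>
    (MetrisAux.PI_weyl hUo hx hn hrel hΓd hAd hΓsym a b c d).symm
  refine ⟨(Matrix.of fun a b => g a b x)⁻¹, ?_, ?_, ?_⟩
  · -- symmetric
    rw [Matrix.IsSymm]
    ext i j
    have h1 : (Matrix.of fun a b => g a b x)⁻¹ j i = minv g j i x := rfl
    have h2 : (Matrix.of fun a b => g a b x)⁻¹ i j = minv g i j x := rfl
    rw [Matrix.transpose_apply, h1, h2, MetrisAux.minv_symm hg hx]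
  · -- nonzero
    intro h0
    have i0 : Fin n := ⟨0, by omega⟩
    have h1 := MetrisAux.minv_g hg hx i0 i0
    rw [show minv g = fun a b x => ((Matrix.of fun i j => g i j x)⁻¹ : Matrix (Fin n) (Fin n) ℝ) a b from rfl] at h1
    simp only [h0] at h1
    simp [kd] at h1
  · -- the identity
    intro c b
    have hκ : ∀ a f : Fin n, ((Matrix.of fun a b => g a b x)⁻¹ : Matrix (Fin n) (Fin n) ℝ) a f
        = minv g a f x := fun a f => rfl
    have hTt : ∀ a f : Fin n, Ttensor Γt e d c b a f x
          * ((Matrix.of fun a b => g a b x)⁻¹ : Matrix (Fin n) (Fin n) ℝ) a f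
        = (1/4) * (kd c a * (weyl (levicivita g) b f e d x * minv g a f x))
        + (1/4) * ((weyl (levicivita g) b a e d x * minv g a f x) * kd c f)
        + (1/4) * (kd b a * (weyl (levicivita g) c f e d x * minv g a f x))
        + (1/4) * ((weyl (levicivita g) c a e d x * minv g a f x) * kd b f)
        + kd b d * ((1/(4*(n:ℝ))) * (weyl (levicivita g) c a f e x * minv g a f x))
        + kd b d * ((1/(4*(n:ℝ))) * (weyl (levicivita g) c f a e x * minv g a f x))
        - kd b e * ((1/(4*(n:ℝ))) * (weyl (levicivita g) c a f d x * minv g a f x))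
        - kd b e * ((1/(4*(n:ℝ))) * (weyl (levicivita g) c f a d x * minv g a f x))
        + kd c d * ((1/(4*(n:ℝ))) * (weyl (levicivita g) b a f e x * minv g a f x))
        + kd c d * ((1/(4*(n:ℝ))) * (weyl (levicivita g) b f a e x * minv g a f x))
        - kd c e * ((1/(4*(n:ℝ))) * (weyl (levicivita g) b a f d x * minv g a f x))
        - kd c e * ((1/(4*(n:ℝ))) * (weyl (levicivita g) b f a d x * minv g a f x)) := by
      intro a f
      rw [hκ]
      simp only [Ttensor, hWeq]
      field_simp
      ring
    rw [Finset.sum_congr rfl fun a _ => Finset.sum_congr rfl fun f _ => hTt a f]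
    simp only [Finset.sum_add_distrib, Finset.sum_sub_distrib, ← Finset.mul_sum]
    simp only [MetrisAux.sum_kd_mul, MetrisAux.sum_mul_kd]
    have hE1 := MetrisAux.E1 hUo hg hx c b e d
    have htW' : ∀ u v : Fin n, 1 / (4 * (n:ℝ))
          * ∑ i : Fin n, ∑ j : Fin n, weyl (levicivita g) u i j v x * minv g i j x
        = -(1/4) * (∑ i : Fin n, schouten (levicivita g) v i x * minv g i u x)
          + 1 / (4 * (n:ℝ)) * (kd u v
            * ∑ i : Fin n, ∑ j : Fin n, schouten (levicivita g) j i x * minv g i j x) := by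
      intro u v
      rw [MetrisAux.traceW hUo hg hx hn u v]
      field_simp
    have rT : ∀ u v : Fin n,
        (∑ i : Fin n, ∑ j : Fin n, weyl (levicivita g) u j i v x * minv g i j x)
        = ∑ i : Fin n, ∑ j : Fin n, weyl (levicivita g) u i j v x * minv g i j x := by
      intro u v
      rw [MetrisAux.sum2_swap (fun i j => weyl (levicivita g) u j i v x * minv g i j x)]
      exact Finset.sum_congr rfl fun i _ => Finset.sum_congr rfl fun j _ => by
        rw [MetrisAux.minv_symm hg hx j i]
    have r1 : (∑ i : Fin n, weyl (levicivita g) b i e d x * minv g i c x)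
        = ∑ i : Fin n, weyl (levicivita g) b i e d x * minv g c i x :=
      Finset.sum_congr rfl fun i _ => by rw [MetrisAux.minv_symm hg hx i c]
    have r2 : (∑ i : Fin n, weyl (levicivita g) c i e d x * minv g b i x)
        = ∑ i : Fin n, weyl (levicivita g) c i e d x * minv g i b x :=
      Finset.sum_congr rfl fun i _ => by rw [MetrisAux.minv_symm hg hx b i]
    have rQ : ∀ u : Fin n, (∑ f, schouten (levicivita g) u f x * minv g c f x)
        = ∑ f, schouten (levicivita g) u f x * minv g f c x :=
      fun u => Finset.sum_congr rfl fun f _ => by rw [MetrisAux.minv_symm hg hx c f]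
    rw [r1, r2, rT c e, rT c d, rT b e, rT b d,
      htW' c e, htW' c d, htW' b e, htW' b d]
    linear_combination (1/2) * hE1 - (1/2) * kd b e * rQ d + (1/2) * kd b d * rQ e
end

section
/- Let n ≥ 2 and let Γ be a special torsion-free affine connection on U. If a triple (g^{ab}, μ^a, ρ) of a smooth symmetric tensor field, a smooth vector field and a smooth function on U satisfies the prolonged system ∇_c g^{ab} = μ^a δ^b_c + μ^b δ^a_c, ∇_a μ^b = ρ δ^b_a − Σ_c P_{ac} g^{bc} − (1/n) Σ_{c,d} W^b_{cda} g^{cd}, ∇_a ρ = −2 Σ_b P_{ab} μ^b + (2/n) Σ_{b,c} Y_{abc} g^{bc}, then for all a, b: Σ_{c,d} U_{[ab]cd} g^{cd} = −((n+3)/2) Σ_c Y_{bac} μ^c at every point of U, where U_{[ab]cd} = ∇_{[a} Y_{b](cd)} + Σ_e W^e_{(cd)[a} P_{b]e}, the square brackets antisymmetrizing over a,b with weight 1/2 and the round brackets symmetrizing over c,d with weight 1/2. -/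
open scoped BigOperators

noncomputable section AuxProof

open scoped BigOperators
open Finset

variable {n : ℕ} {U : Set (Fin n → ℝ)} {x : Fin n → ℝ} {b : Fin n}
  {f g : (Fin n → ℝ) → ℝ}

theorem pd_contDiffOn (hU : IsOpen U) (hf : ContDiffOn ℝ (⊤ : ℕ∞) f U) (b : Fin n) :
    ContDiffOn ℝ (⊤ : ℕ∞) (pd b f) U := by
  rw [hU.contDiffOn_iff] at hf ⊢
  intro x hx
  have h1 : ContDiffAt ℝ (⊤ : ℕ∞) (fderiv ℝ f) x := (hf hx).fderiv_right (by simp)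
  exact (ContinuousLinearMap.apply ℝ ℝ (Pi.single b 1 : Fin n → ℝ)).contDiff.contDiffAt.comp x h1

theorem diffAt_of_cdo (hU : IsOpen U) (hf : ContDiffOn ℝ (⊤ : ℕ∞) f U) (hx : x ∈ U) :
    DifferentiableAt ℝ f x :=
  ((hf.contDiffAt (hU.mem_nhds hx)).differentiableAt (by simp))

theorem pd_congr_nhds (hU : IsOpen U) (hx : x ∈ U)
    (h : ∀ y ∈ U, f y = g y) (b : Fin n) : pd b f x = pd b g x := by
  unfold pd
  rw [Filter.EventuallyEq.fderiv_eq (Filter.eventuallyEq_of_mem (hU.mem_nhds hx) h)]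

theorem pd_add (hf : DifferentiableAt ℝ f x) (hg : DifferentiableAt ℝ g x) :
    pd b (fun y => f y + g y) x = pd b f x + pd b g x := by
  unfold pd; rw [fderiv_fun_add hf hg]; simp

theorem pd_mul (hf : DifferentiableAt ℝ f x) (hg : DifferentiableAt ℝ g x) :
    pd b (fun y => f y * g y) x = pd b f x * g x + f x * pd b g x := by
  unfold pd; rw [fderiv_fun_mul hf hg]; simp; ring

theorem pd_const_mul (hf : DifferentiableAt ℝ f x) (c : ℝ) :
    pd b (fun y => c * f y) x = c * pd b f x := by
  unfold pd; rw [fderiv_const_mul hf]; simp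

theorem pd_sum {ι : Type*} {s : Finset ι} {A : ι → (Fin n → ℝ) → ℝ}
    (h : ∀ i ∈ s, DifferentiableAt ℝ (A i) x) :
    pd b (fun y => ∑ i ∈ s, A i y) x = ∑ i ∈ s, pd b (A i) x := by
  unfold pd; rw [fderiv_fun_sum h]; simp

theorem pd_pd_symm {ρ : (Fin n → ℝ) → ℝ} (hU : IsOpen U) (hρ : ContDiffOn ℝ (⊤ : ℕ∞) ρ U)
    (hx : x ∈ U) (a b : Fin n) : pd b (pd a ρ) x = pd a (pd b ρ) x := by
  have hc : ContDiffAt ℝ (⊤ : ℕ∞) ρ x := hρ.contDiffAt (hU.mem_nhds hx)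
  have hsymm := hc.isSymmSndFDerivAt (by rw [minSmoothness_of_isRCLikeNormedField]; exact WithTop.coe_le_coe.mpr le_top)
  have hd : DifferentiableAt ℝ (fderiv ℝ ρ) x :=
    (hc.fderiv_right (m := 1) (by exact WithTop.coe_le_coe.mpr le_top)).differentiableAt one_ne_zero
  have key : ∀ v w : Fin n → ℝ,
      fderiv ℝ (fun y => fderiv ℝ ρ y v) x w = fderiv ℝ (fderiv ℝ ρ) x w v := by
    intro v w
    rw [fderiv_clm_apply hd (differentiableAt_const v)]
    simp
  show (fderiv ℝ (fun y => fderiv ℝ ρ y (Pi.single a 1)) x) (Pi.single b 1)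
      = (fderiv ℝ (fun y => fderiv ℝ ρ y (Pi.single b 1)) x) (Pi.single a 1)
  rw [key, key, hsymm]

/-! ### Sum permutation helpers -/

theorem sum2_swap_eq {f h : Fin n → Fin n → ℝ} (hfh : ∀ c e, f c e = h e c) :
    (∑ c, ∑ e, f c e) = ∑ c, ∑ e, h c e := by
  rw [Finset.sum_comm]
  exact Finset.sum_congr rfl fun c _ => Finset.sum_congr rfl fun e _ => hfh e c

theorem sum3_rot (F : Fin n → Fin n → Fin n → ℝ) :
    (∑ c, ∑ d, ∑ e, F c d e) = ∑ e, ∑ c, ∑ d, F c d e :=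
  (Finset.sum_congr rfl fun _ _ => Finset.sum_comm).trans Finset.sum_comm

theorem sum3_rot_eq {f h : Fin n → Fin n → Fin n → ℝ} (hfh : ∀ c d e, f c d e = h e c d) :
    (∑ c, ∑ d, ∑ e, f c d e) = ∑ c, ∑ d, ∑ e, h c d e := by
  rw [sum3_rot f]
  exact Finset.sum_congr rfl fun e _ => Finset.sum_congr rfl fun c _ =>
    Finset.sum_congr rfl fun d _ => hfh c d e

theorem sum3_rotl_eq {f h : Fin n → Fin n → Fin n → ℝ} (hfh : ∀ c d e, f c d e = h d e c) :
    (∑ c, ∑ d, ∑ e, f c d e) = ∑ c, ∑ d, ∑ e, h c d e :=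
  (sum3_rot_eq (f := h) (h := f) (fun c d e => (hfh e c d).symm)).symm

theorem sum3_swap23_eq {f h : Fin n → Fin n → Fin n → ℝ} (hfh : ∀ c d e, f c d e = h c e d) :
    (∑ c, ∑ d, ∑ e, f c d e) = ∑ c, ∑ d, ∑ e, h c d e := by
  refine Finset.sum_congr rfl fun c _ => ?_
  rw [Finset.sum_comm]
  exact Finset.sum_congr rfl fun d _ => Finset.sum_congr rfl fun e _ => hfh c e d

theorem sum3_swap13_eq {f h : Fin n → Fin n → Fin n → ℝ} (hfh : ∀ c d e, f c d e = h e d c) :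
    (∑ c, ∑ d, ∑ e, f c d e) = ∑ c, ∑ d, ∑ e, h c d e :=
  sum3_rot_eq (fun c d e => (hfh c d e).trans rfl) |>.trans
    (sum3_swap23_eq (fun c d e => rfl)) |>.trans rfl

/-! ### Smoothness chain -/

section Smooth

variable (hU : IsOpen U) {Γ : Fin n → Fin n → Fin n → (Fin n → ℝ) → ℝ}
  (hΓ : ∀ a b c, ContDiffOn ℝ (⊤ : ℕ∞) (Γ a b c) U)

include hU hΓ

theorem curv_cdo (a b c d : Fin n) : ContDiffOn ℝ (⊤ : ℕ∞) (curv Γ a b c d) U := by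
  unfold curv
  exact (((pd_contDiffOn hU (hΓ a b d) c).sub (pd_contDiffOn hU (hΓ a b c) d)).add
    (ContDiffOn.sum fun e _ => ((hΓ a e c).mul (hΓ e b d)).sub ((hΓ a e d).mul (hΓ e b c))))

theorem ricci_cdo (b d : Fin n) : ContDiffOn ℝ (⊤ : ℕ∞) (ricci Γ b d) U := by
  unfold ricci
  exact ContDiffOn.sum fun a _ => curv_cdo hU hΓ a b a d

theorem schouten_cdo (a b : Fin n) : ContDiffOn ℝ (⊤ : ℕ∞) (schouten Γ a b) U := by
  unfold schouten
  exact ((contDiffOn_const.mul (((ricci_cdo hU hΓ a b).add (ricci_cdo hU hΓ b a)).div_const 2)).sub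
    (contDiffOn_const.mul (((ricci_cdo hU hΓ a b).sub (ricci_cdo hU hΓ b a)).div_const 2)))

theorem covSchouten_cdo (a b c : Fin n) : ContDiffOn ℝ (⊤ : ℕ∞) (covSchouten Γ a b c) U := by
  unfold covSchouten
  exact (((pd_contDiffOn hU (schouten_cdo hU hΓ b c) a).sub
      (ContDiffOn.sum fun e _ => (hΓ e b a).mul (schouten_cdo hU hΓ e c))).sub
    (ContDiffOn.sum fun e _ => (hΓ e c a).mul (schouten_cdo hU hΓ b e)))

theorem cotton_cdo (a b c : Fin n) : ContDiffOn ℝ (⊤ : ℕ∞) (cotton Γ a b c) U := by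
  unfold cotton
  exact (covSchouten_cdo hU hΓ a b c).sub (covSchouten_cdo hU hΓ b a c)

end Smooth

/-! ### Pointwise symmetry lemmas -/

section Pointwise

variable {Γ : Fin n → Fin n → Fin n → (Fin n → ℝ) → ℝ}

theorem cotton_antisym (x : Fin n → ℝ) (p q r : Fin n) :
    cotton Γ p q r x = -cotton Γ q p r x := by
  simp only [cotton]; ring

theorem covSchouten_symm (hU : IsOpen U) (hsp : IsSpecial U Γ) (hx : x ∈ U) (p q r : Fin n) :
    covSchouten Γ p q r x = covSchouten Γ p r q x := by
  simp only [covSchouten]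
  rw [pd_congr_nhds hU hx (fun y hy => hsp q r y hy) p]
  have h1 : (∑ e, Γ e q p x * schouten Γ e r x) = ∑ e, Γ e q p x * schouten Γ r e x :=
    Finset.sum_congr rfl fun e _ => by rw [hsp e r x hx]
  have h2 : (∑ e, Γ e r p x * schouten Γ q e x) = ∑ e, Γ e r p x * schouten Γ e q x :=
    Finset.sum_congr rfl fun e _ => by rw [hsp q e x hx]
  rw [h1, h2]; ring

theorem cotton_cyclic (hU : IsOpen U) (hsp : IsSpecial U Γ) (hx : x ∈ U) (p q r : Fin n) :
    cotton Γ p q r x + cotton Γ q r p x + cotton Γ r p q x = 0 := by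
  simp only [cotton]
  linear_combination covSchouten_symm hU hsp hx p q r + covSchouten_symm hU hsp hx q r p
    + covSchouten_symm hU hsp hx r p q

end Pointwise

/-! ### Leibniz expansion of the derivative of the RHS of the third prolonged equation -/

section Expand

variable {Γ : Fin n → Fin n → Fin n → (Fin n → ℝ) → ℝ}
  {g : Fin n → Fin n → (Fin n → ℝ) → ℝ} {μ : Fin n → (Fin n → ℝ) → ℝ}

theorem pdExpand (hU : IsOpen U)
    (hΓ : ∀ a b c, ContDiffOn ℝ (⊤ : ℕ∞) (Γ a b c) U)
    (hg : ∀ a b, ContDiffOn ℝ (⊤ : ℕ∞) (g a b) U)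
    (hμ : ∀ a, ContDiffOn ℝ (⊤ : ℕ∞) (μ a) U)
    (hx : x ∈ U) (b a : Fin n) :
    pd b (fun y => -2 * (∑ c, schouten Γ a c y * μ c y)
        + (2/(n : ℝ)) * ∑ c, ∑ d, cotton Γ a c d y * g c d y) x
    = -2 * (∑ c, covSchouten Γ b a c x * μ c x)
      - 2 * (∑ c, schouten Γ a c x * covVec Γ b c μ x)
      + (2/(n : ℝ)) * (∑ c, ∑ d, covCotton Γ b a c d x * g c d x)
      + (2/(n : ℝ)) * (∑ c, ∑ d, cotton Γ a c d x * covUp2 Γ b c d g x)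
      + ∑ e, Γ e a b x * (-2 * (∑ c, schouten Γ e c x * μ c x)
          + (2/(n : ℝ)) * ∑ c, ∑ d, cotton Γ e c d x * g c d x) := by
  have dP : ∀ p q, DifferentiableAt ℝ (schouten Γ p q) x :=
    fun p q => diffAt_of_cdo hU (schouten_cdo hU hΓ p q) hx
  have dY : ∀ p q r, DifferentiableAt ℝ (cotton Γ p q r) x :=
    fun p q r => diffAt_of_cdo hU (cotton_cdo hU hΓ p q r) hx
  have dμ : ∀ p, DifferentiableAt ℝ (μ p) x := fun p => diffAt_of_cdo hU (hμ p) hx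
  have dg : ∀ p q, DifferentiableAt ℝ (g p q) x := fun p q => diffAt_of_cdo hU (hg p q) hx
  have dS1 : DifferentiableAt ℝ (fun y => ∑ c, schouten Γ a c y * μ c y) x :=
    DifferentiableAt.fun_sum fun c _ => (dP a c).fun_mul (dμ c)
  have dS2 : DifferentiableAt ℝ (fun y => ∑ c, ∑ d, cotton Γ a c d y * g c d y) x :=
    DifferentiableAt.fun_sum fun c _ => DifferentiableAt.fun_sum fun d _ => (dY a c d).fun_mul (dg c d)
  have e0 : pd b (fun y => -2 * (∑ c, schouten Γ a c y * μ c y)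
        + (2/(n : ℝ)) * ∑ c, ∑ d, cotton Γ a c d y * g c d y) x
      = -2 * pd b (fun y => ∑ c, schouten Γ a c y * μ c y) x
        + (2/(n : ℝ)) * pd b (fun y => ∑ c, ∑ d, cotton Γ a c d y * g c d y) x := by
    rw [pd_add (dS1.const_mul _) (dS2.const_mul _), pd_const_mul dS1, pd_const_mul dS2]
  -- first sum
  have h2 : ∀ c, pd b (schouten Γ a c) x = covSchouten Γ b a c x
      + (∑ e, Γ e a b x * schouten Γ e c x) + ∑ e, Γ e c b x * schouten Γ a e x := by
    intro c; simp only [covSchouten]; ring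
  have h3 : ∀ c, pd b (μ c) x = covVec Γ b c μ x - ∑ e, Γ c e b x * μ e x := by
    intro c; simp only [covVec]; ring
  have e1 : pd b (fun y => ∑ c, schouten Γ a c y * μ c y) x
      = (∑ c, (covSchouten Γ b a c x * μ c x + schouten Γ a c x * covVec Γ b c μ x))
        + (∑ c, ∑ e, Γ e a b x * (schouten Γ e c x * μ c x))
        + ((∑ c, ∑ e, Γ e c b x * (schouten Γ a e x * μ c x))
          - (∑ c, ∑ e, schouten Γ a c x * (Γ c e b x * μ e x))) := by
    calc pd b (fun y => ∑ c, schouten Γ a c y * μ c y) x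
        = ∑ c, (pd b (schouten Γ a c) x * μ c x + schouten Γ a c x * pd b (μ c) x) := by
          rw [pd_sum (fun c _ => (dP a c).fun_mul (dμ c))]
          exact Finset.sum_congr rfl fun c _ => pd_mul (dP a c) (dμ c)
      _ = ∑ c, ((covSchouten Γ b a c x * μ c x + schouten Γ a c x * covVec Γ b c μ x)
            + ((∑ e, Γ e a b x * (schouten Γ e c x * μ c x))
              + ((∑ e, Γ e c b x * (schouten Γ a e x * μ c x))
                - (∑ e, schouten Γ a c x * (Γ c e b x * μ e x))))) := by
          refine Finset.sum_congr rfl fun c _ => ?_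
          rw [h2 c, h3 c]
          have q1 : (∑ e, Γ e a b x * schouten Γ e c x) * μ c x
              = ∑ e, Γ e a b x * (schouten Γ e c x * μ c x) := by
            rw [Finset.sum_mul]; exact Finset.sum_congr rfl fun e _ => by ring
          have q2 : (∑ e, Γ e c b x * schouten Γ a e x) * μ c x
              = ∑ e, Γ e c b x * (schouten Γ a e x * μ c x) := by
            rw [Finset.sum_mul]; exact Finset.sum_congr rfl fun e _ => by ring
          have q3 : schouten Γ a c x * (∑ e, Γ c e b x * μ e x)
              = ∑ e, schouten Γ a c x * (Γ c e b x * μ e x) := Finset.mul_sum _ _ _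
          linear_combination q1 + q2 - q3
      _ = _ := by
          simp only [Finset.sum_add_distrib, Finset.sum_sub_distrib]
          ring
  -- second sum
  have h4 : ∀ c d, pd b (cotton Γ a c d) x = covCotton Γ b a c d x
      + (∑ e, Γ e a b x * cotton Γ e c d x) + (∑ e, Γ e c b x * cotton Γ a e d x)
      + ∑ e, Γ e d b x * cotton Γ a c e x := by
    intro c d; simp only [covCotton]; ring
  have h5 : ∀ c d, pd b (g c d) x = covUp2 Γ b c d g x
      - (∑ e, Γ c e b x * g e d x) - ∑ e, Γ d e b x * g c e x := by
    intro c d; simp only [covUp2]; ring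
  have e2 : pd b (fun y => ∑ c, ∑ d, cotton Γ a c d y * g c d y) x
      = (∑ c, ∑ d, (covCotton Γ b a c d x * g c d x + cotton Γ a c d x * covUp2 Γ b c d g x))
        + (∑ c, ∑ d, ∑ e, Γ e a b x * (cotton Γ e c d x * g c d x))
        + (((∑ c, ∑ d, ∑ e, Γ e c b x * (cotton Γ a e d x * g c d x))
            - (∑ c, ∑ d, ∑ e, cotton Γ a c d x * (Γ c e b x * g e d x)))
          + ((∑ c, ∑ d, ∑ e, Γ e d b x * (cotton Γ a c e x * g c d x))
            - (∑ c, ∑ d, ∑ e, cotton Γ a c d x * (Γ d e b x * g c e x)))) := by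
    calc pd b (fun y => ∑ c, ∑ d, cotton Γ a c d y * g c d y) x
        = ∑ c, ∑ d, (pd b (cotton Γ a c d) x * g c d x + cotton Γ a c d x * pd b (g c d) x) := by
          rw [pd_sum (fun c _ => DifferentiableAt.fun_sum fun d _ => (dY a c d).fun_mul (dg c d))]
          refine Finset.sum_congr rfl fun c _ => ?_
          rw [pd_sum (fun d _ => (dY a c d).fun_mul (dg c d))]
          exact Finset.sum_congr rfl fun d _ => pd_mul (dY a c d) (dg c d)
      _ = ∑ c, ∑ d, ((covCotton Γ b a c d x * g c d x + cotton Γ a c d x * covUp2 Γ b c d g x)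
            + ((∑ e, Γ e a b x * (cotton Γ e c d x * g c d x))
              + (((∑ e, Γ e c b x * (cotton Γ a e d x * g c d x))
                  - (∑ e, cotton Γ a c d x * (Γ c e b x * g e d x)))
                + ((∑ e, Γ e d b x * (cotton Γ a c e x * g c d x))
                  - (∑ e, cotton Γ a c d x * (Γ d e b x * g c e x)))))) := by
          refine Finset.sum_congr rfl fun c _ => Finset.sum_congr rfl fun d _ => ?_
          rw [h4 c d, h5 c d]
          have q1 : (∑ e, Γ e a b x * cotton Γ e c d x) * g c d x
              = ∑ e, Γ e a b x * (cotton Γ e c d x * g c d x) := by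
            rw [Finset.sum_mul]; exact Finset.sum_congr rfl fun e _ => by ring
          have q2 : (∑ e, Γ e c b x * cotton Γ a e d x) * g c d x
              = ∑ e, Γ e c b x * (cotton Γ a e d x * g c d x) := by
            rw [Finset.sum_mul]; exact Finset.sum_congr rfl fun e _ => by ring
          have q3 : (∑ e, Γ e d b x * cotton Γ a c e x) * g c d x
              = ∑ e, Γ e d b x * (cotton Γ a c e x * g c d x) := by
            rw [Finset.sum_mul]; exact Finset.sum_congr rfl fun e _ => by ring
          have q4 : cotton Γ a c d x * (∑ e, Γ c e b x * g e d x)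
              = ∑ e, cotton Γ a c d x * (Γ c e b x * g e d x) := Finset.mul_sum _ _ _
          have q5 : cotton Γ a c d x * (∑ e, Γ d e b x * g c e x)
              = ∑ e, cotton Γ a c d x * (Γ d e b x * g c e x) := Finset.mul_sum _ _ _
          linear_combination q1 + q2 + q3 - q4 - q5
      _ = _ := by
          simp only [Finset.sum_add_distrib, Finset.sum_sub_distrib]
          ring
  -- cancellations
  have hC1 : (∑ c, ∑ e, Γ e c b x * (schouten Γ a e x * μ c x))
      = ∑ c, ∑ e, schouten Γ a c x * (Γ c e b x * μ e x) :=
    sum2_swap_eq (fun c e => by ring)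
  have hC2 : (∑ c, ∑ d, ∑ e, Γ e c b x * (cotton Γ a e d x * g c d x))
      = ∑ c, ∑ d, ∑ e, cotton Γ a c d x * (Γ c e b x * g e d x) :=
    sum3_swap13_eq (fun c d e => by ring)
  have hC3 : (∑ c, ∑ d, ∑ e, Γ e d b x * (cotton Γ a c e x * g c d x))
      = ∑ c, ∑ d, ∑ e, cotton Γ a c d x * (Γ d e b x * g c e x) :=
    sum3_swap23_eq (fun c d e => by ring)
  -- symmetric-part collection
  have hswapX : (∑ c, ∑ e, Γ e a b x * (schouten Γ e c x * μ c x))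
      = ∑ e, ∑ c, Γ e a b x * (schouten Γ e c x * μ c x) := Finset.sum_comm
  have hswapB : (∑ c, ∑ d, ∑ e, Γ e a b x * (cotton Γ e c d x * g c d x))
      = ∑ e, ∑ c, ∑ d, Γ e a b x * (cotton Γ e c d x * g c d x) := sum3_rot _
  have hsymtot : (∑ e, Γ e a b x * (-2 * (∑ c, schouten Γ e c x * μ c x)
          + (2/(n : ℝ)) * ∑ c, ∑ d, cotton Γ e c d x * g c d x))
      = -2 * (∑ e, ∑ c, Γ e a b x * (schouten Γ e c x * μ c x))
        + (2/(n : ℝ)) * ∑ e, ∑ c, ∑ d, Γ e a b x * (cotton Γ e c d x * g c d x) := by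
    have per : ∀ e : Fin n, Γ e a b x * (-2 * (∑ c, schouten Γ e c x * μ c x)
          + (2/(n : ℝ)) * ∑ c, ∑ d, cotton Γ e c d x * g c d x)
        = -2 * (∑ c, Γ e a b x * (schouten Γ e c x * μ c x))
          + (2/(n : ℝ)) * ∑ c, ∑ d, Γ e a b x * (cotton Γ e c d x * g c d x) := by
      intro e
      have u : Γ e a b x * (∑ c, schouten Γ e c x * μ c x)
          = ∑ c, Γ e a b x * (schouten Γ e c x * μ c x) := Finset.mul_sum _ _ _
      have v : Γ e a b x * (∑ c, ∑ d, cotton Γ e c d x * g c d x)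
          = ∑ c, ∑ d, Γ e a b x * (cotton Γ e c d x * g c d x) := by
        rw [Finset.mul_sum]
        exact Finset.sum_congr rfl fun c _ => Finset.mul_sum _ _ _
      linear_combination (-2 : ℝ) * u + (2/(n : ℝ)) * v
    rw [Finset.sum_congr rfl fun e _ => per e, Finset.sum_add_distrib, ← Finset.mul_sum,
      ← Finset.mul_sum]
  rw [e0, e1, e2]
  have hA : (∑ c, (covSchouten Γ b a c x * μ c x + schouten Γ a c x * covVec Γ b c μ x))
      = (∑ c, covSchouten Γ b a c x * μ c x) + ∑ c, schouten Γ a c x * covVec Γ b c μ x :=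
    Finset.sum_add_distrib
  have hCD : (∑ c, ∑ d, (covCotton Γ b a c d x * g c d x
        + cotton Γ a c d x * covUp2 Γ b c d g x))
      = (∑ c, ∑ d, covCotton Γ b a c d x * g c d x)
        + ∑ c, ∑ d, cotton Γ a c d x * covUp2 Γ b c d g x := by
    simp only [Finset.sum_add_distrib]
  linear_combination (-2 : ℝ) * hA + (2/(n : ℝ)) * hCD + (-2 : ℝ) * hC1 + (2/(n : ℝ)) * hC2
    + (2/(n : ℝ)) * hC3 + (-2 : ℝ) * hswapX + (2/(n : ℝ)) * hswapB - hsymtot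

end Expand

/-! ### The key integrability identity -/

section Key

variable {Γ : Fin n → Fin n → Fin n → (Fin n → ℝ) → ℝ}
  {g : Fin n → Fin n → (Fin n → ℝ) → ℝ} {μ : Fin n → (Fin n → ℝ) → ℝ}
  {ρ : (Fin n → ℝ) → ℝ}

theorem keyEQ (hU : IsOpen U) (hΓ : IsConn U Γ) (hgs : SmoothSym2 U g)
    (hμ : ∀ a, ContDiffOn ℝ (⊤ : ℕ∞) (μ a) U) (hρ : ContDiffOn ℝ (⊤ : ℕ∞) ρ U)
    (hsys : ProlongedSys U Γ g μ ρ) (hx : x ∈ U) (a b : Fin n) :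
    -2 * (∑ c, cotton Γ b a c x * μ c x)
      - 2 * (∑ c, schouten Γ a c x * covVec Γ b c μ x)
      + 2 * (∑ c, schouten Γ b c x * covVec Γ a c μ x)
      + (2/(n : ℝ)) * (∑ c, ∑ d, covCotton Γ b a c d x * g c d x)
      - (2/(n : ℝ)) * (∑ c, ∑ d, covCotton Γ a b c d x * g c d x)
      + (2/(n : ℝ)) * (∑ c, ∑ d, cotton Γ a c d x * covUp2 Γ b c d g x)
      - (2/(n : ℝ)) * (∑ c, ∑ d, cotton Γ b c d x * covUp2 Γ a c d g x) = 0 := by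
  have hpdc : ∀ p q : Fin n, pd q (pd p ρ) x
      = pd q (fun y => -2 * (∑ c, schouten Γ p c y * μ c y)
          + (2/(n : ℝ)) * ∑ c, ∑ d, cotton Γ p c d y * g c d y) x :=
    fun p q => pd_congr_nhds hU hx (fun y hy => hsys.2.2 p y hy) q
  have main : pd b (fun y => -2 * (∑ c, schouten Γ a c y * μ c y)
          + (2/(n : ℝ)) * ∑ c, ∑ d, cotton Γ a c d y * g c d y) x
      = pd a (fun y => -2 * (∑ c, schouten Γ b c y * μ c y)
          + (2/(n : ℝ)) * ∑ c, ∑ d, cotton Γ b c d y * g c d y) x := by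
    rw [← hpdc a b, ← hpdc b a]
    exact pd_pd_symm hU hρ hx a b
  have Eb := pdExpand hU hΓ.1 hgs.1 hμ hx b a
  have Ea := pdExpand hU hΓ.1 hgs.1 hμ hx a b
  have hsymΓ : (∑ e, Γ e a b x * (-2 * (∑ c, schouten Γ e c x * μ c x)
          + (2/(n : ℝ)) * ∑ c, ∑ d, cotton Γ e c d x * g c d x))
      = ∑ e, Γ e b a x * (-2 * (∑ c, schouten Γ e c x * μ c x)
          + (2/(n : ℝ)) * ∑ c, ∑ d, cotton Γ e c d x * g c d x) :=
    Finset.sum_congr rfl fun e _ => by rw [hΓ.2 e a b x hx]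
  have hcot : (∑ c, cotton Γ b a c x * μ c x)
      = (∑ c, covSchouten Γ b a c x * μ c x) - ∑ c, covSchouten Γ a b c x * μ c x := by
    rw [← Finset.sum_sub_distrib]
    exact Finset.sum_congr rfl fun c _ => by simp only [cotton]; ring
  linear_combination main - Eb + Ea - hsymΓ - 2 * hcot

end Key

/-! ### Contraction lemmas F2, F3, F4 -/

section Fs

variable {Γ : Fin n → Fin n → Fin n → (Fin n → ℝ) → ℝ}
  {g : Fin n → Fin n → (Fin n → ℝ) → ℝ} {μ : Fin n → (Fin n → ℝ) → ℝ}
  {ρ : (Fin n → ℝ) → ℝ}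

theorem F2eq (hsp : IsSpecial U Γ) (hgs : SmoothSym2 U g)
    (hsys : ProlongedSys U Γ g μ ρ) (hx : x ∈ U) (a b : Fin n) :
    (∑ c, schouten Γ a c x * covVec Γ b c μ x)
      - (∑ c, schouten Γ b c x * covVec Γ a c μ x)
    = (1/(n : ℝ)) * ((∑ c, ∑ d, ∑ e, weyl Γ e c d a x * schouten Γ b e x * g c d x)
        - ∑ c, ∑ d, ∑ e, weyl Γ e c d b x * schouten Γ a e x * g c d x) := by
  have hV : ∀ p q : Fin n, (∑ c, schouten Γ p c x * covVec Γ q c μ x)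
      = (∑ c, schouten Γ p c x * (ρ x * kd c q))
        - (∑ c, ∑ d, schouten Γ p c x * (schouten Γ q d x * g c d x))
        - (1/(n : ℝ)) * ∑ c, ∑ d, ∑ e, schouten Γ p c x * (weyl Γ c d e q x * g d e x) := by
    intro p q
    have per : ∀ c : Fin n, schouten Γ p c x * covVec Γ q c μ x
        = schouten Γ p c x * (ρ x * kd c q)
          - (∑ d, schouten Γ p c x * (schouten Γ q d x * g c d x))
          - (1/(n : ℝ)) * ∑ d, ∑ e, schouten Γ p c x * (weyl Γ c d e q x * g d e x) := by
      intro c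
      rw [hsys.2.1 q c x hx]
      have u1 : schouten Γ p c x * (∑ d, schouten Γ q d x * g c d x)
          = ∑ d, schouten Γ p c x * (schouten Γ q d x * g c d x) := Finset.mul_sum _ _ _
      have u2 : schouten Γ p c x * (∑ d, ∑ e, weyl Γ c d e q x * g d e x)
          = ∑ d, ∑ e, schouten Γ p c x * (weyl Γ c d e q x * g d e x) := by
        rw [Finset.mul_sum]
        exact Finset.sum_congr rfl fun d _ => Finset.mul_sum _ _ _
      linear_combination -u1 - (1/(n : ℝ)) * u2
    rw [Finset.sum_congr rfl fun c _ => per c]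
    simp only [Finset.sum_sub_distrib, ← Finset.mul_sum]
  have hkd : ∀ p q : Fin n, (∑ c, schouten Γ p c x * (ρ x * kd c q))
      = schouten Γ p q x * ρ x := by
    intro p q
    simp [kd, mul_ite, mul_one, mul_zero]
  have hPP : (∑ c, ∑ d, schouten Γ a c x * (schouten Γ b d x * g c d x))
      = ∑ c, ∑ d, schouten Γ b c x * (schouten Γ a d x * g c d x) :=
    sum2_swap_eq (fun c d => by rw [hgs.2 c d x hx]; ring)
  have hWr : ∀ p q : Fin n,
      (∑ c, ∑ d, ∑ e, schouten Γ p c x * (weyl Γ c d e q x * g d e x))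
      = ∑ c, ∑ d, ∑ e, weyl Γ e c d q x * schouten Γ p e x * g c d x :=
    fun p q => sum3_rotl_eq (fun c d e => by ring)
  have hρsym : schouten Γ a b x * ρ x = schouten Γ b a x * ρ x := by
    rw [hsp a b x hx]
  linear_combination hV a b - hV b a + hkd a b - hkd b a + hρsym - hPP
    - (1/(n : ℝ)) * (hWr a b) + (1/(n : ℝ)) * (hWr b a)

theorem F3eq (hU : IsOpen U) (hsp : IsSpecial U Γ)
    (hsys : ProlongedSys U Γ g μ ρ) (hx : x ∈ U) (a b : Fin n) :
    (∑ c, ∑ d, cotton Γ a c d x * covUp2 Γ b c d g x)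
      - (∑ c, ∑ d, cotton Γ b c d x * covUp2 Γ a c d g x)
    = -3 * ∑ c, cotton Γ b a c x * μ c x := by
  have hG : ∀ p q : Fin n, (∑ c, ∑ d, cotton Γ p c d x * covUp2 Γ q c d g x)
      = (∑ c, cotton Γ p c q x * μ c x) + ∑ c, cotton Γ p q c x * μ c x := by
    intro p q
    have per : ∀ c d : Fin n, cotton Γ p c d x * covUp2 Γ q c d g x
        = cotton Γ p c d x * (μ c x * kd d q) + cotton Γ p c d x * (μ d x * kd c q) := by
      intro c d
      rw [hsys.1 c d q x hx]
      ring
    rw [Finset.sum_congr rfl fun c _ => Finset.sum_congr rfl fun d _ => per c d]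
    simp only [Finset.sum_add_distrib]
    have k1 : (∑ c, ∑ d, cotton Γ p c d x * (μ c x * kd d q))
        = ∑ c, cotton Γ p c q x * μ c x := by
      refine Finset.sum_congr rfl fun c _ => ?_
      simp [kd, mul_ite, mul_one, mul_zero]
    have k2 : (∑ c, ∑ d, cotton Γ p c d x * (μ d x * kd c q))
        = ∑ c, cotton Γ p q c x * μ c x := by
      rw [Finset.sum_comm]
      refine Finset.sum_congr rfl fun d _ => ?_
      simp [kd, mul_ite, mul_one, mul_zero]
    rw [k1, k2]
  have pt : ∀ c : Fin n, cotton Γ a c b x + cotton Γ a b c x - cotton Γ b c a x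
      + 2 * cotton Γ b a c x = 0 := by
    intro c
    have hcyc := cotton_cyclic hU hsp hx a b c
    have h1 := cotton_antisym (Γ := Γ) x a c b
    have h2 := cotton_antisym (Γ := Γ) x a b c
    linear_combination h1 - hcyc + 2 * h2
  have hzero : (∑ c, cotton Γ a c b x * μ c x) + (∑ c, cotton Γ a b c x * μ c x)
      - (∑ c, cotton Γ b c a x * μ c x) + 2 * (∑ c, cotton Γ b a c x * μ c x) = 0 := by
    have hz : (∑ c, (cotton Γ a c b x * μ c x + cotton Γ a b c x * μ c x
        - cotton Γ b c a x * μ c x + 2 * (cotton Γ b a c x * μ c x))) = 0 :=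
      Finset.sum_eq_zero fun c _ => by linear_combination μ c x * pt c
    calc (∑ c, cotton Γ a c b x * μ c x) + (∑ c, cotton Γ a b c x * μ c x)
          - (∑ c, cotton Γ b c a x * μ c x) + 2 * (∑ c, cotton Γ b a c x * μ c x)
        = (∑ c, (cotton Γ a c b x * μ c x + cotton Γ a b c x * μ c x
            - cotton Γ b c a x * μ c x + 2 * (cotton Γ b a c x * μ c x))) := by
          simp only [Finset.sum_add_distrib, Finset.sum_sub_distrib, ← Finset.mul_sum]
      _ = 0 := hz
  linear_combination hG a b - hG b a + hzero

theorem F4eq (hgs : SmoothSym2 U g) (hx : x ∈ U) (a b : Fin n) :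
    (∑ c, ∑ d, Utensor Γ a b c d x * g c d x)
    = (1/2) * ((∑ c, ∑ d, covCotton Γ a b c d x * g c d x)
        - ∑ c, ∑ d, covCotton Γ b a c d x * g c d x)
      + (1/2) * ((∑ c, ∑ d, ∑ e, weyl Γ e c d a x * schouten Γ b e x * g c d x)
        - ∑ c, ∑ d, ∑ e, weyl Γ e c d b x * schouten Γ a e x * g c d x) := by
  have per : ∀ c d : Fin n, Utensor Γ a b c d x * g c d x
      = (1/4) * (covCotton Γ a b c d x * g c d x)
        + (1/4) * (covCotton Γ a b d c x * g c d x)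
        - (1/4) * (covCotton Γ b a c d x * g c d x)
        - (1/4) * (covCotton Γ b a d c x * g c d x)
        + (1/4) * (∑ e, weyl Γ e c d a x * schouten Γ b e x * g c d x)
        + (1/4) * (∑ e, weyl Γ e d c a x * schouten Γ b e x * g c d x)
        - (1/4) * (∑ e, weyl Γ e c d b x * schouten Γ a e x * g c d x)
        - (1/4) * (∑ e, weyl Γ e d c b x * schouten Γ a e x * g c d x) := by
    intro c d
    simp only [Utensor]
    rw [add_mul, Finset.sum_mul]
    have hper : (∑ e, ((((weyl Γ e c d a x + weyl Γ e d c a x)/2) * schouten Γ b e x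
          - ((weyl Γ e c d b x + weyl Γ e d c b x)/2) * schouten Γ a e x)/2) * g c d x)
        = (1/4) * (∑ e, weyl Γ e c d a x * schouten Γ b e x * g c d x)
          + (1/4) * (∑ e, weyl Γ e d c a x * schouten Γ b e x * g c d x)
          - ((1/4) * (∑ e, weyl Γ e c d b x * schouten Γ a e x * g c d x)
            + (1/4) * (∑ e, weyl Γ e d c b x * schouten Γ a e x * g c d x)) := by
      rw [Finset.sum_congr rfl (fun e _ => show ((((weyl Γ e c d a x + weyl Γ e d c a x)/2)
            * schouten Γ b e x
          - ((weyl Γ e c d b x + weyl Γ e d c b x)/2) * schouten Γ a e x)/2) * g c d x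
        = (1/4) * (weyl Γ e c d a x * schouten Γ b e x * g c d x)
          + (1/4) * (weyl Γ e d c a x * schouten Γ b e x * g c d x)
          - ((1/4) * (weyl Γ e c d b x * schouten Γ a e x * g c d x)
            + (1/4) * (weyl Γ e d c b x * schouten Γ a e x * g c d x)) by ring)]
      simp only [Finset.sum_add_distrib, Finset.sum_sub_distrib, ← Finset.mul_sum]
    linear_combination hper
  rw [Finset.sum_congr rfl fun c _ => Finset.sum_congr rfl fun d _ => per c d]
  simp only [Finset.sum_add_distrib, Finset.sum_sub_distrib, ← Finset.mul_sum]
  have sw1 : (∑ c, ∑ d, covCotton Γ a b d c x * g c d x)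
      = ∑ c, ∑ d, covCotton Γ a b c d x * g c d x :=
    sum2_swap_eq (fun c d => by rw [hgs.2 c d x hx])
  have sw2 : (∑ c, ∑ d, covCotton Γ b a d c x * g c d x)
      = ∑ c, ∑ d, covCotton Γ b a c d x * g c d x :=
    sum2_swap_eq (fun c d => by rw [hgs.2 c d x hx])
  have sw3 : (∑ c, ∑ d, ∑ e, weyl Γ e d c a x * schouten Γ b e x * g c d x)
      = ∑ c, ∑ d, ∑ e, weyl Γ e c d a x * schouten Γ b e x * g c d x :=
    sum2_swap_eq (fun c d => by rw [hgs.2 c d x hx])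
  have sw4 : (∑ c, ∑ d, ∑ e, weyl Γ e d c b x * schouten Γ a e x * g c d x)
      = ∑ c, ∑ d, ∑ e, weyl Γ e c d b x * schouten Γ a e x * g c d x :=
    sum2_swap_eq (fun c d => by rw [hgs.2 c d x hx])
  linear_combination (1/4 : ℝ) * sw1 - (1/4 : ℝ) * sw2 + (1/4 : ℝ) * sw3 - (1/4 : ℝ) * sw4

end Fs

end AuxProof

/-- (Proposition 3.9) If `(g^{ab}, μ^a, ρ)` solves the prolonged system
for a special connection `Γ`, then
`Σ_{c,d} U_{[ab]cd} g^{cd} = -((n+3)/2) Σ_c Y_{bac} μ^c`. -/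
theorem prolonged_implies_U_obstruction {n : ℕ} (hn : 2 ≤ n)
    (U : Set (Fin n → ℝ)) (hUo : IsOpen U) (hUne : U.Nonempty)
    (Γ : Fin n → Fin n → Fin n → (Fin n → ℝ) → ℝ) (hΓ : IsConn U Γ)
    (hsp : IsSpecial U Γ)
    (gup : Fin n → Fin n → (Fin n → ℝ) → ℝ) (μ : Fin n → (Fin n → ℝ) → ℝ)
    (ρ : (Fin n → ℝ) → ℝ)
    (hgs : SmoothSym2 U gup) (hμ : ∀ a, ContDiffOn ℝ (⊤ : ℕ∞) (μ a) U)
    (hρ : ContDiffOn ℝ (⊤ : ℕ∞) ρ U)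
    (hsys : ProlongedSys U Γ gup μ ρ) :
    ∀ x ∈ U, ∀ a b : Fin n,
      (∑ c, ∑ d, Utensor Γ a b c d x * gup c d x)
        = -(((n : ℝ) + 3)/2) * ∑ c, cotton Γ b a c x * μ c x := by
  intro x hx a b
  have hn0 : (n : ℝ) ≠ 0 := by
    have : (0 : ℝ) < (n : ℝ) := by exact_mod_cast lt_of_lt_of_le (by norm_num) hn
    exact ne_of_gt this
  have k := keyEQ hUo hΓ hgs hμ hρ hsys hx a b
  have f2 := F2eq hsp hgs hsys hx a b
  have f3 := F3eq hUo hsp hsys hx a b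
  have f4 := F4eq (Γ := Γ) hgs hx a b
  have hmn : (2/(n : ℝ)) * (n : ℝ) = 2 := by field_simp
  rw [f4]
  linear_combination (-(n : ℝ)/4) * k + (-(n : ℝ)/2) * f2 + (1/2 : ℝ) * f3
    - (((∑ c, ∑ d, covCotton Γ a b c d x * gup c d x)
        - (∑ c, ∑ d, covCotton Γ b a c d x * gup c d x)
        - (∑ c, ∑ d, cotton Γ a c d x * covUp2 Γ b c d gup x)
        + (∑ c, ∑ d, cotton Γ b c d x * covUp2 Γ a c d gup x)
        + (∑ c, ∑ d, ∑ e, weyl Γ e c d a x * schouten Γ b e x * gup c d x)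
        - (∑ c, ∑ d, ∑ e, weyl Γ e c d b x * schouten Γ a e x * gup c d x))/4) * hmn
end
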